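/- arXiv:1209.2218 — 7 statements merged into one kernel-verified Lean document; each statement's English description precedes it below -/
import Mathlib

section
/- For every forest T on n vertices and every real ε ≥ 0, there exists a vertex v such that either (a) T \ {v} can be partitioned into two disjoint subforests T₁, T₂ with |T₁|, |T₂| ≤ (1/2 + ε)n, or (b) T \ {v} can be partitioned into three disjoint subforests T₁, T₂, T₃ with |T₁|, |T₂|, |T₃| ≤ (1/2 − ε)n, where in each case there are no edges between the parts. -/
open Finset

namespace ForestSplit

variable {V : Type*} [Fintype V] (G : SimpleGraph V)

/-- The graph `G` with vertex `v` isolated. -/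
def del (v : V) : SimpleGraph V where
  Adj a b := G.Adj a b ∧ a ≠ v ∧ b ≠ v
  symm := ⟨fun a b ⟨h, ha, hb⟩ => ⟨h.symm, hb, ha⟩⟩
  loopless := ⟨fun a ⟨h, _, _⟩ => G.loopless.irrefl a h⟩

lemma del_le (v : V) : del G v ≤ G := fun _ _ h => h.1

open Classical in
/-- The piece (connected component of `G - v`) containing `w`. -/
noncomputable def pieceF (v w : V) : Finset V :=
  Finset.univ.filter (fun x => (del G v).Reachable w x)

open Classical in
lemma mem_pieceF {v w x : V} : x ∈ pieceF G v w ↔ (del G v).Reachable w x := by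
  simp [pieceF]

lemma self_mem_pieceF (v w : V) : w ∈ pieceF G v w :=
  (mem_pieceF G).2 (SimpleGraph.Reachable.refl w)

lemma reach_ne_del {v w x : V} (h : (del G v).Reachable w x) (hw : w ≠ v) : x ≠ v := by
  obtain ⟨p⟩ := h
  induction p with
  | nil => exact hw
  | cons h p ih => exact ih h.2.2

lemma ne_of_mem_pieceF {v w x : V} (hx : x ∈ pieceF G v w) (hw : w ≠ v) : x ≠ v :=
  reach_ne_del G ((mem_pieceF G).1 hx) hw

lemma pieceF_eq {v w w' : V} (h : (del G v).Reachable w w') :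
    pieceF G v w = pieceF G v w' := by
  ext x
  simp only [mem_pieceF]
  exact ⟨fun hx => h.symm.trans hx, fun hx => h.trans hx⟩

lemma pieceF_disjoint {v w w' : V} (h : ¬ (del G v).Reachable w w') :
    Disjoint (pieceF G v w) (pieceF G v w') := by
  rw [Finset.disjoint_left]
  intro x hx hx'
  exact h (((mem_pieceF G).1 hx).trans ((mem_pieceF G).1 hx').symm)

lemma adj_mem_pieceF {v w a b : V} (ha : a ∈ pieceF G v w) (hw : w ≠ v)
    (hab : G.Adj a b) (hb : b ≠ v) : b ∈ pieceF G v w := by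
  rw [mem_pieceF] at ha ⊢
  exact ha.trans (SimpleGraph.Adj.reachable ⟨hab, ne_of_mem_pieceF G ((mem_pieceF G).2 ha) hw, hb⟩)

end ForestSplit

namespace ForestSplit
variable {V : Type*} [Fintype V] (G : SimpleGraph V)

lemma not_mem_support_del {v w x : V} (p : (del G v).Walk w x) (hw : w ≠ v) :
    v ∉ p.support := by
  induction p with
  | nil => simpa using hw.symm
  | cons h p ih =>
    simp only [SimpleGraph.Walk.support_cons, List.mem_cons]
    push_neg
    exact ⟨fun hv => hw hv.symm, ih h.2.2⟩

lemma unique_nbr (hG : G.IsAcyclic) {v w y₁ y₂ : V}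
    (h₁ : y₁ ∈ pieceF G v w) (h₂ : y₂ ∈ pieceF G v w) (hw : w ≠ v)
    (ha₁ : G.Adj v y₁) (ha₂ : G.Adj v y₂) : y₁ = y₂ := by
  classical
  by_contra hne
  have hr : (del G v).Reachable y₁ y₂ :=
    (((mem_pieceF G).1 h₁).symm).trans ((mem_pieceF G).1 h₂)
  obtain ⟨p⟩ := hr
  have hy₁v : y₁ ≠ v := ha₁.ne'
  have hvsupp : v ∉ p.support := not_mem_support_del G p hy₁v
  -- map to a walk in G
  let q : G.Walk y₁ y₂ := p.mapLe (del_le G v)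
  have hqsupp : q.support = p.support := by
    simp only [q, SimpleGraph.Walk.mapLe, SimpleGraph.Walk.support_map]
    exact List.map_id _
  let q' := q.toPath
  have hq'supp : v ∉ (q' : G.Walk y₁ y₂).support := by
    intro hv
    exact hvsupp (hqsupp ▸ SimpleGraph.Walk.support_toPath_subset _ hv)
  have hpath1 : (SimpleGraph.Walk.cons ha₁ (q' : G.Walk y₁ y₂)).IsPath :=
    q'.2.cons hq'supp
  have hpath2 : (SimpleGraph.Walk.cons ha₂ SimpleGraph.Walk.nil).IsPath := by
    simp [SimpleGraph.Walk.isPath_iff_eq_nil, ha₂.ne, ha₂.ne']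
  have := hG.path_unique ⟨_, hpath1⟩ ⟨_, hpath2⟩
  have hsupp := congrArg (fun r : G.Path v y₂ => (r : G.Walk v y₂).support) this
  simp only [SimpleGraph.Walk.support_cons, SimpleGraph.Walk.support_nil] at hsupp
  have : y₁ ∈ ([v, y₂] : List V) := by
    rw [← hsupp]
    exact List.mem_cons_of_mem _ (SimpleGraph.Walk.start_mem_support _)
  simp at this
  rcases this with h | h
  · exact hy₁v h
  · exact hne h

end ForestSplit

namespace ForestSplit
variable {V : Type*} [Fintype V] (G : SimpleGraph V)

open Classical in
noncomputable def fmax (v : V) : ℕ :=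
  Finset.univ.sup (fun w => if w = v then 0 else (pieceF G v w).card)

lemma centroid [Nonempty V] (hG : G.IsAcyclic) :
    ∃ v : V, ∀ w, w ≠ v → 2 * (pieceF G v w).card ≤ Fintype.card V := by
  classical
  obtain ⟨v, -, hv⟩ := Finset.exists_min_image Finset.univ (fmax G) ⟨Classical.arbitrary V, Finset.mem_univ _⟩
  refine ⟨v, fun w hw => ?_⟩
  by_contra hbig
  push_neg at hbig
  set D := pieceF G v w with hD
  have hwD : w ∈ D := self_mem_pieceF G v w
  have hvD : ∀ x ∈ D, x ≠ v := fun x hx => ne_of_mem_pieceF G hx hw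
  -- find the unique possible neighbor of v in D
  have hex : ∃ u ∈ D, ∀ y ∈ D, G.Adj v y → y = u := by
    by_cases h : ∃ x ∈ D, G.Adj v x
    · obtain ⟨u, huD, hadj⟩ := h
      exact ⟨u, huD, fun y hy hady => unique_nbr G hG hy huD hw hady hadj⟩
    · push_neg at h
      exact ⟨w, hwD, fun y hy hady => absurd hady (h y hy)⟩
  obtain ⟨u, huD, huniq⟩ := hex
  -- no G-edges between D \ {u} and Dᶜ
  have hcross : ∀ a ∈ D, a ≠ u → ∀ b, b ∉ D → ¬ G.Adj a b := by
    intro a ha hau b hb hab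
    by_cases hbv : b = v
    · exact hau (huniq a ha (hbv ▸ hab.symm))
    · exact hb (adj_mem_pieceF G ha hw hab hbv)
  -- edges of del G u preserve membership in D
  have hstep : ∀ a b, (del G u).Adj a b → (a ∈ D ↔ b ∈ D) := by
    intro a b ⟨hab, hau, hbu⟩
    constructor
    · intro ha
      by_contra hb
      exact hcross a ha hau b hb hab
    · intro hb
      by_contra ha
      exact hcross b hb hbu a ha hab.symm
  have hreach : ∀ w' x, (del G u).Reachable w' x → (w' ∈ D ↔ x ∈ D) := by
    intro w' x hr
    obtain ⟨p⟩ := hr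
    induction p with
    | nil => rfl
    | cons h p ih => exact (hstep _ _ h).trans ih
  have hDpos : 1 ≤ D.card := Finset.card_pos.2 ⟨w, hwD⟩
  -- every piece of G - u is small
  have hsmall : ∀ w', w' ≠ u → (pieceF G u w').card < D.card := by
    intro w' hw'
    by_cases hw'D : w' ∈ D
    · have hsub : pieceF G u w' ⊆ D.erase u := by
        intro x hx
        refine Finset.mem_erase.2 ⟨ne_of_mem_pieceF G hx hw', ?_⟩
        exact (hreach w' x ((mem_pieceF G).1 hx)).1 hw'D
      calc (pieceF G u w').card ≤ (D.erase u).card := Finset.card_le_card hsub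
        _ < D.card := by rw [Finset.card_erase_of_mem huD]; omega
    · have hsub : pieceF G u w' ⊆ Dᶜ := by
        intro x hx
        simp only [Finset.mem_compl]
        intro hxD
        exact hw'D ((hreach w' x ((mem_pieceF G).1 hx)).2 hxD)
      have : (pieceF G u w').card ≤ Fintype.card V - D.card := by
        calc (pieceF G u w').card ≤ (Dᶜ : Finset V).card := Finset.card_le_card hsub
          _ = Fintype.card V - D.card := Finset.card_compl D
      omega
  have hfu : fmax G u < D.card := by
    rw [fmax, Finset.sup_lt_iff (by simpa [bot_eq_zero] using hDpos : (⊥ : ℕ) < D.card)]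
    intro w' _
    by_cases h : w' = u
    · rw [if_pos h]; exact hDpos
    · simpa [h] using hsmall w' h
  have hfv : D.card ≤ fmax G v := by
    have h2 : (if w = v then 0 else (pieceF G v w).card) ≤ fmax G v :=
      by rw [fmax]
         exact Finset.le_sup (f := fun w' => if w' = v then 0 else (pieceF G v w').card)
           (Finset.mem_univ w)
    rwa [if_neg hw] at h2
  have := hv u (Finset.mem_univ u)
  omega

end ForestSplit

namespace ForestSplit
variable {V : Type*} [Fintype V] [DecidableEq V] (G : SimpleGraph V)

open Classical in
noncomputable def comps (v : V) : Finset (Finset V) :=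
  (Finset.univ.erase v).image (pieceF G v)

lemma mem_comps {v : V} {C : Finset V} :
    C ∈ comps G v ↔ ∃ w, w ≠ v ∧ C = pieceF G v w := by
  classical
  simp only [comps, Finset.mem_image, Finset.mem_erase, Finset.mem_univ, and_true]
  exact ⟨fun ⟨w, hw, h⟩ => ⟨w, hw, h.symm⟩, fun ⟨w, hw, h⟩ => ⟨w, hw, h.symm⟩⟩

lemma comps_disjoint {v : V} {C C' : Finset V} (hC : C ∈ comps G v)
    (hC' : C' ∈ comps G v) (hne : C ≠ C') : Disjoint C C' := by
  obtain ⟨w, hw, rfl⟩ := (mem_comps G).1 hC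
  obtain ⟨w', hw', rfl⟩ := (mem_comps G).1 hC'
  refine pieceF_disjoint G (fun hr => hne ?_)
  exact pieceF_eq G hr

lemma comps_not_v {v : V} {C : Finset V} (hC : C ∈ comps G v) {x : V} (hx : x ∈ C) :
    x ≠ v := by
  obtain ⟨w, hw, rfl⟩ := (mem_comps G).1 hC
  exact ne_of_mem_pieceF G hx hw

lemma comps_closed {v : V} {C : Finset V} (hC : C ∈ comps G v) {a b : V}
    (ha : a ∈ C) (hab : G.Adj a b) (hb : b ≠ v) : b ∈ C := by
  obtain ⟨w, hw, rfl⟩ := (mem_comps G).1 hC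
  exact adj_mem_pieceF G ha hw hab hb

lemma comps_biUnion (v : V) : (comps G v).biUnion id = Finset.univ.erase v := by
  classical
  ext x
  simp only [Finset.mem_biUnion, id, Finset.mem_erase, Finset.mem_univ, and_true]
  constructor
  · rintro ⟨C, hC, hx⟩
    exact comps_not_v G hC hx
  · intro hx
    exact ⟨pieceF G v x, (mem_comps G).2 ⟨x, hx, rfl⟩, self_mem_pieceF G v x⟩

lemma comps_sum (v : V) [Nonempty V] :
    (∑ C ∈ comps G v, C.card) + 1 = Fintype.card V := by
  classical
  have h1 : ((comps G v).biUnion id).card = ∑ C ∈ comps G v, C.card :=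
    Finset.card_biUnion (fun C hC C' hC' hne => comps_disjoint G hC hC' hne)
  rw [comps_biUnion] at h1
  rw [← h1, Finset.card_erase_of_mem (Finset.mem_univ v), Finset.card_univ]
  have : 1 ≤ Fintype.card V := Fintype.card_pos
  omega

-- no G-edges between distinct components
lemma comps_no_cross {v : V} {C C' : Finset V} (hC : C ∈ comps G v)
    (hC' : C' ∈ comps G v) (hne : C ≠ C') {a b : V} (ha : a ∈ C) (hb : b ∈ C') :
    ¬ G.Adj a b := by
  intro hab
  have hbv : b ≠ v := comps_not_v G hC' hb
  have : b ∈ C := comps_closed G hC ha hab hbv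
  exact (Finset.disjoint_left.1 (comps_disjoint G hC hC' hne)) this hb

-- facts about unions of subfamilies
lemma fam_card {v : V} {𝒜 : Finset (Finset V)} (h𝒜 : 𝒜 ⊆ comps G v) :
    (𝒜.biUnion id).card = ∑ C ∈ 𝒜, C.card :=
  Finset.card_biUnion (fun C hC C' hC' hne => comps_disjoint G (h𝒜 hC) (h𝒜 hC') hne)

lemma fam_disjoint {v : V} {𝒜 ℬ : Finset (Finset V)} (h𝒜 : 𝒜 ⊆ comps G v)
    (hℬ : ℬ ⊆ comps G v) (hd : Disjoint 𝒜 ℬ) :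
    Disjoint (𝒜.biUnion id) (ℬ.biUnion id) := by
  rw [Finset.disjoint_left]
  intro x hx hx'
  simp only [Finset.mem_biUnion, id] at hx hx'
  obtain ⟨C, hC, hxC⟩ := hx
  obtain ⟨C', hC', hxC'⟩ := hx'
  have hne : C ≠ C' := fun h => (Finset.disjoint_left.1 hd) hC (h ▸ hC')
  exact (Finset.disjoint_left.1 (comps_disjoint G (h𝒜 hC) (hℬ hC') hne)) hxC hxC'

lemma fam_no_cross {v : V} {𝒜 ℬ : Finset (Finset V)} (h𝒜 : 𝒜 ⊆ comps G v)
    (hℬ : ℬ ⊆ comps G v) (hd : Disjoint 𝒜 ℬ) :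
    ∀ a ∈ 𝒜.biUnion id, ∀ b ∈ ℬ.biUnion id, ¬ G.Adj a b := by
  intro a ha b hb
  simp only [Finset.mem_biUnion, id] at ha hb
  obtain ⟨C, hC, haC⟩ := ha
  obtain ⟨C', hC', hbC'⟩ := hb
  have hne : C ≠ C' := fun h => (Finset.disjoint_left.1 hd) hC (h ▸ hC')
  exact comps_no_cross G (h𝒜 hC) (hℬ hC') hne haC hbC'

end ForestSplit

namespace ForestSplit
variable {V : Type*} [Fintype V] [DecidableEq V] (G : SimpleGraph V)

lemma coe_biUnion_union {v : V} {𝒜 ℬ : Finset (Finset V)} (hcover : 𝒜 ∪ ℬ = comps G v) :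
    (↑(𝒜.biUnion id) : Set V) ∪ ↑(ℬ.biUnion id) = ({v}ᶜ : Set V) := by
  have h : (𝒜.biUnion id) ∪ (ℬ.biUnion id) = Finset.univ.erase v := by
    rw [← comps_biUnion G v, ← hcover]
    ext x
    simp only [Finset.mem_union, Finset.mem_biUnion, id]
    aesop
  rw [← Finset.coe_union, h, Finset.coe_erase, Finset.coe_univ,
    ← Set.compl_eq_univ_diff]

lemma two_split (v : V) (ε : ℝ) {𝒜 ℬ : Finset (Finset V)}
    (h𝒜 : 𝒜 ⊆ comps G v) (hℬ : ℬ ⊆ comps G v) (hd : Disjoint 𝒜 ℬ)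
    (hcover : 𝒜 ∪ ℬ = comps G v)
    (hA : ((∑ C ∈ 𝒜, C.card : ℕ) : ℝ) ≤ (1/2 + ε) * Fintype.card V)
    (hB : ((∑ C ∈ ℬ, C.card : ℕ) : ℝ) ≤ (1/2 + ε) * Fintype.card V) :
    ∃ T₁ T₂ : Set V,
      Disjoint T₁ T₂ ∧ T₁ ∪ T₂ = ({v}ᶜ : Set V) ∧
      (∀ a ∈ T₁, ∀ b ∈ T₂, ¬ G.Adj a b) ∧
      (T₁.ncard : ℝ) ≤ (1/2 + ε) * Fintype.card V ∧
      (T₂.ncard : ℝ) ≤ (1/2 + ε) * Fintype.card V := by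
  refine ⟨↑(𝒜.biUnion id), ↑(ℬ.biUnion id),
    Finset.disjoint_coe.2 (fam_disjoint G h𝒜 hℬ hd), coe_biUnion_union G hcover,
    fun a ha b hb => fam_no_cross G h𝒜 hℬ hd a ha b hb, ?_, ?_⟩
  · rw [Set.ncard_coe_finset, fam_card G h𝒜]; exact hA
  · rw [Set.ncard_coe_finset, fam_card G hℬ]; exact hB

lemma three_split (v : V) (ε : ℝ) {𝒜 ℬ 𝒞 : Finset (Finset V)}
    (h𝒜 : 𝒜 ⊆ comps G v) (hℬ : ℬ ⊆ comps G v) (h𝒞 : 𝒞 ⊆ comps G v)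
    (hdAB : Disjoint 𝒜 ℬ) (hdAC : Disjoint 𝒜 𝒞) (hdBC : Disjoint ℬ 𝒞)
    (hcover : 𝒜 ∪ ℬ ∪ 𝒞 = comps G v)
    (hA : ((∑ C ∈ 𝒜, C.card : ℕ) : ℝ) ≤ (1/2 - ε) * Fintype.card V)
    (hB : ((∑ C ∈ ℬ, C.card : ℕ) : ℝ) ≤ (1/2 - ε) * Fintype.card V)
    (hC : ((∑ C ∈ 𝒞, C.card : ℕ) : ℝ) ≤ (1/2 - ε) * Fintype.card V) :
    ∃ T₁ T₂ T₃ : Set V,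
      Disjoint T₁ T₂ ∧ Disjoint T₁ T₃ ∧ Disjoint T₂ T₃ ∧
      T₁ ∪ T₂ ∪ T₃ = ({v}ᶜ : Set V) ∧
      (∀ a ∈ T₁, ∀ b ∈ T₂, ¬ G.Adj a b) ∧
      (∀ a ∈ T₁, ∀ b ∈ T₃, ¬ G.Adj a b) ∧
      (∀ a ∈ T₂, ∀ b ∈ T₃, ¬ G.Adj a b) ∧
      (T₁.ncard : ℝ) ≤ (1/2 - ε) * Fintype.card V ∧
      (T₂.ncard : ℝ) ≤ (1/2 - ε) * Fintype.card V ∧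
      (T₃.ncard : ℝ) ≤ (1/2 - ε) * Fintype.card V := by
  have hunion : ((𝒜 ∪ ℬ).biUnion id : Finset V) = 𝒜.biUnion id ∪ ℬ.biUnion id := by
    ext x
    simp only [Finset.mem_union, Finset.mem_biUnion, id]
    aesop
  have hAB : 𝒜 ∪ ℬ ⊆ comps G v := Finset.union_subset h𝒜 hℬ
  refine ⟨↑(𝒜.biUnion id), ↑(ℬ.biUnion id), ↑(𝒞.biUnion id),
    Finset.disjoint_coe.2 (fam_disjoint G h𝒜 hℬ hdAB),
    Finset.disjoint_coe.2 (fam_disjoint G h𝒜 h𝒞 hdAC),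
    Finset.disjoint_coe.2 (fam_disjoint G hℬ h𝒞 hdBC), ?_,
    fun a ha b hb => fam_no_cross G h𝒜 hℬ hdAB a ha b hb,
    fun a ha b hb => fam_no_cross G h𝒜 h𝒞 hdAC a ha b hb,
    fun a ha b hb => fam_no_cross G hℬ h𝒞 hdBC a ha b hb, ?_, ?_, ?_⟩
  · have := coe_biUnion_union G (𝒜 := 𝒜 ∪ ℬ) (ℬ := 𝒞) hcover
    rw [hunion, Finset.coe_union] at this
    exact this
  · rw [Set.ncard_coe_finset, fam_card G h𝒜]; exact hA
  · rw [Set.ncard_coe_finset, fam_card G hℬ]; exact hB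
  · rw [Set.ncard_coe_finset, fam_card G h𝒞]; exact hC

end ForestSplit

/-- Splitting Lemma for Forests.  For every forest `T` on `n` vertices and
every real `ε ≥ 0`, there is a vertex `v` such that `T \ {v}` splits either into two
parts of size at most `(1/2 + ε)n` or into three parts of size at most `(1/2 - ε)n`,
with no edges of `T` between distinct parts. -/
theorem forest_splitting {V : Type*} [Fintype V] [Nonempty V] (G : SimpleGraph V)
    (hforest : G.IsAcyclic) (ε : ℝ) (hε : 0 ≤ ε) :
    ∃ v : V,
      (∃ T₁ T₂ : Set V,
        Disjoint T₁ T₂ ∧ T₁ ∪ T₂ = ({v}ᶜ : Set V) ∧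
        (∀ a ∈ T₁, ∀ b ∈ T₂, ¬ G.Adj a b) ∧
        (T₁.ncard : ℝ) ≤ (1/2 + ε) * Fintype.card V ∧
        (T₂.ncard : ℝ) ≤ (1/2 + ε) * Fintype.card V) ∨
      (∃ T₁ T₂ T₃ : Set V,
        Disjoint T₁ T₂ ∧ Disjoint T₁ T₃ ∧ Disjoint T₂ T₃ ∧
        T₁ ∪ T₂ ∪ T₃ = ({v}ᶜ : Set V) ∧
        (∀ a ∈ T₁, ∀ b ∈ T₂, ¬ G.Adj a b) ∧
        (∀ a ∈ T₁, ∀ b ∈ T₃, ¬ G.Adj a b) ∧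
        (∀ a ∈ T₂, ∀ b ∈ T₃, ¬ G.Adj a b) ∧
        (T₁.ncard : ℝ) ≤ (1/2 - ε) * Fintype.card V ∧
        (T₂.ncard : ℝ) ≤ (1/2 - ε) * Fintype.card V ∧
        (T₃.ncard : ℝ) ≤ (1/2 - ε) * Fintype.card V) := by
  classical
  obtain ⟨v, hcent⟩ := ForestSplit.centroid G hforest
  refine ⟨v, ?_⟩
  have hn1 : 1 ≤ Fintype.card V := Fintype.card_pos
  have hnR : (1 : ℝ) ≤ (Fintype.card V : ℝ) := by exact_mod_cast hn1
  set K := ForestSplit.comps G v with hKdef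
  have hsum := ForestSplit.comps_sum G v
  have hsumR : ((∑ C ∈ K, C.card : ℕ) : ℝ) = (Fintype.card V : ℝ) - 1 := by
    rw [← hKdef] at hsum
    have h : ((∑ C ∈ K, C.card : ℕ) : ℝ) + 1 = (Fintype.card V : ℝ) := by
      exact_mod_cast hsum
    linarith
  have hhalf : ∀ C ∈ K, (C.card : ℝ) ≤ (Fintype.card V : ℝ) / 2 := by
    intro C hC
    obtain ⟨w, hw, rfl⟩ := (ForestSplit.mem_comps G).1 hC
    have h2 := hcent w hw
    have h2R : 2 * ((ForestSplit.pieceF G v w).card : ℝ) ≤ (Fintype.card V : ℝ) := by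
      exact_mod_cast h2
    linarith
  have hpos : ∀ C ∈ K, 1 ≤ C.card := by
    intro C hC
    obtain ⟨w, hw, rfl⟩ := (ForestSplit.mem_comps G).1 hC
    exact Finset.card_pos.2 ⟨w, ForestSplit.self_mem_pieceF G v w⟩
  by_cases hbigex : ∃ C₀ ∈ K, (1/2 - ε) * (Fintype.card V : ℝ) - 1 ≤ (C₀.card : ℝ)
  · -- Case A: a large component exists; split into it and the rest
    left
    obtain ⟨C₀, hC₀, hbig⟩ := hbigex
    have hrest : (∑ C ∈ K.erase C₀, C.card) + C₀.card = ∑ C ∈ K, C.card :=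
      Finset.sum_erase_add _ _ hC₀
    have hrestR : ((∑ C ∈ K.erase C₀, C.card : ℕ) : ℝ)
        = (Fintype.card V : ℝ) - 1 - C₀.card := by
      have h : ((∑ C ∈ K.erase C₀, C.card : ℕ) : ℝ) + (C₀.card : ℝ)
          = ((∑ C ∈ K, C.card : ℕ) : ℝ) := by exact_mod_cast hrest
      linarith
    refine ForestSplit.two_split G v ε (𝒜 := {C₀}) (ℬ := K.erase C₀)
      (by simpa using hC₀) (Finset.erase_subset _ _) ?_ ?_ ?_ ?_
    · simp [Finset.disjoint_singleton_left]
    · rw [← Finset.insert_eq, Finset.insert_erase hC₀]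
    · rw [Finset.sum_singleton]
      have := hhalf C₀ hC₀
      nlinarith
    · rw [hrestR]
      nlinarith
  · push_neg at hbigex
    by_cases hKe : K = ∅
    · -- no components at all: n = 1
      left
      have h0 : (0 : ℝ) ≤ (1/2 + ε) * (Fintype.card V : ℝ) := by nlinarith
      refine ForestSplit.two_split G v ε (𝒜 := ∅) (ℬ := ∅) (by simp) (by simp)
        (by simp) (by simpa using hKe.symm) (by simpa using h0) (by simpa using h0)
    · obtain ⟨C₁, hC₁⟩ := Finset.nonempty_iff_ne_empty.2 hKe
      have hc2 : 2 < (1/2 - ε) * (Fintype.card V : ℝ) := by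
        have h1 : (1 : ℝ) ≤ (C₁.card : ℝ) := by exact_mod_cast hpos C₁ hC₁
        linarith [hbigex C₁ hC₁]
      -- first maximal family
      obtain ⟨𝒜, h𝒜mem, h𝒜max⟩ := Finset.exists_max_image
        ((K.powerset).filter
          (fun 𝒮 => ((∑ C ∈ 𝒮, C.card : ℕ) : ℝ) ≤ (1/2 - ε) * (Fintype.card V : ℝ)))
        (fun 𝒮 => ∑ C ∈ 𝒮, C.card)
        ⟨∅, by simp; linarith⟩
      simp only [Finset.mem_filter, Finset.mem_powerset] at h𝒜mem
      obtain ⟨h𝒜sub, h𝒜le⟩ := h𝒜mem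
      -- second maximal family
      obtain ⟨ℬ, hℬmem, hℬmax⟩ := Finset.exists_max_image
        (((K \ 𝒜).powerset).filter
          (fun 𝒮 => ((∑ C ∈ 𝒮, C.card : ℕ) : ℝ) ≤ (1/2 - ε) * (Fintype.card V : ℝ)))
        (fun 𝒮 => ∑ C ∈ 𝒮, C.card)
        ⟨∅, by simp; linarith⟩
      simp only [Finset.mem_filter, Finset.mem_powerset] at hℬmem
      obtain ⟨hℬsub, hℬle⟩ := hℬmem
      set 𝒞 := (K \ 𝒜) \ ℬ with h𝒞def
      have hℬsubK : ℬ ⊆ K := hℬsub.trans Finset.sdiff_subset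
      have h𝒞subK : 𝒞 ⊆ K := Finset.sdiff_subset.trans Finset.sdiff_subset
      have hdAB : Disjoint 𝒜 ℬ :=
        (Finset.disjoint_of_subset_left hℬsub Finset.sdiff_disjoint).symm
      have hdAC : Disjoint 𝒜 𝒞 :=
        (Finset.disjoint_of_subset_left Finset.sdiff_subset Finset.sdiff_disjoint).symm
      have hdBC : Disjoint ℬ 𝒞 := Finset.sdiff_disjoint.symm
      have hcover : 𝒜 ∪ ℬ ∪ 𝒞 = K := by
        rw [Finset.union_assoc, h𝒞def, Finset.union_sdiff_of_subset hℬsub,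
          Finset.union_sdiff_of_subset h𝒜sub]
      have hsplit : ∑ C ∈ 𝒜, C.card + ∑ C ∈ ℬ, C.card + ∑ C ∈ 𝒞, C.card
          = ∑ C ∈ K, C.card := by
        rw [← hcover, Finset.sum_union (Finset.disjoint_union_left.2 ⟨hdAC, hdBC⟩),
          Finset.sum_union hdAB]
      have hsplitR : ((∑ C ∈ 𝒜, C.card : ℕ) : ℝ) + ((∑ C ∈ ℬ, C.card : ℕ) : ℝ)
          + ((∑ C ∈ 𝒞, C.card : ℕ) : ℝ) = (Fintype.card V : ℝ) - 1 := by
        have h : ((∑ C ∈ 𝒜, C.card : ℕ) : ℝ) + ((∑ C ∈ ℬ, C.card : ℕ) : ℝ)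
            + ((∑ C ∈ 𝒞, C.card : ℕ) : ℝ) = ((∑ C ∈ K, C.card : ℕ) : ℝ) := by
          exact_mod_cast hsplit
        linarith [hsumR]
      by_cases hγ : ((∑ C ∈ 𝒞, C.card : ℕ) : ℝ) ≤ (1/2 - ε) * (Fintype.card V : ℝ)
      · right
        exact ForestSplit.three_split G v ε h𝒜sub hℬsubK h𝒞subK hdAB hdAC hdBC
          hcover h𝒜le hℬle hγ
      · left
        push_neg at hγ
        -- pick a component in 𝒞
        have h𝒞ne : 𝒞.Nonempty := by
          rw [Finset.nonempty_iff_ne_empty]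
          intro h
          rw [h] at hγ
          simp at hγ
          linarith
        obtain ⟨C₀, hC₀𝒞⟩ := h𝒞ne
        have hC₀K : C₀ ∈ K := h𝒞subK hC₀𝒞
        have hC₀KA : C₀ ∈ K \ 𝒜 := Finset.sdiff_subset hC₀𝒞
        have hC₀nA : C₀ ∉ 𝒜 := (Finset.mem_sdiff.1 hC₀KA).2
        have hq1 : 1 ≤ C₀.card := hpos C₀ hC₀K
        have hqc : (C₀.card : ℝ) ≤ (1/2 - ε) * (Fintype.card V : ℝ) := by
          linarith [hbigex C₀ hC₀K]
        -- maximality of 𝒜 : a + q > c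
        have haq : (1/2 - ε) * (Fintype.card V : ℝ)
            < ((∑ C ∈ 𝒜, C.card : ℕ) : ℝ) + (C₀.card : ℝ) := by
          by_contra hle
          push_neg at hle
          have hmem : insert C₀ 𝒜 ∈ (K.powerset).filter
              (fun 𝒮 => ((∑ C ∈ 𝒮, C.card : ℕ) : ℝ) ≤ (1/2 - ε) * (Fintype.card V : ℝ)) := by
            rw [Finset.mem_filter, Finset.mem_powerset]
            constructor
            · exact Finset.insert_subset hC₀K h𝒜sub
            · rw [Finset.sum_insert hC₀nA]
              push_cast
              push_cast at hle
              linarith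
          have hmax : ∑ C ∈ insert C₀ 𝒜, C.card ≤ ∑ C ∈ 𝒜, C.card := h𝒜max _ hmem
          rw [Finset.sum_insert hC₀nA] at hmax
          omega
        -- maximality of ℬ : q ≤ b
        have hqb : C₀.card ≤ ∑ C ∈ ℬ, C.card := by
          have hmem : ({C₀} : Finset (Finset V)) ∈ ((K \ 𝒜).powerset).filter
              (fun 𝒮 => ((∑ C ∈ 𝒮, C.card : ℕ) : ℝ) ≤ (1/2 - ε) * (Fintype.card V : ℝ)) := by
            rw [Finset.mem_filter, Finset.mem_powerset]
            exact ⟨Finset.singleton_subset_iff.2 hC₀KA, by simpa using hqc⟩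
          have h : ∑ C ∈ ({C₀} : Finset (Finset V)), C.card ≤ ∑ C ∈ ℬ, C.card :=
            hℬmax _ hmem
          simpa using h
        have hqbR : (C₀.card : ℝ) ≤ ((∑ C ∈ ℬ, C.card : ℕ) : ℝ) := by exact_mod_cast hqb
        have hdABC : Disjoint (𝒜 ∪ ℬ) 𝒞 := Finset.disjoint_union_left.2 ⟨hdAC, hdBC⟩
        have hsum2 : ((∑ C ∈ 𝒜 ∪ ℬ, C.card : ℕ) : ℝ)
            = ((∑ C ∈ 𝒜, C.card : ℕ) : ℝ) + ((∑ C ∈ ℬ, C.card : ℕ) : ℝ) := by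
          rw [Finset.sum_union hdAB]
          push_cast
          ring
        refine ForestSplit.two_split G v ε (Finset.union_subset h𝒜sub hℬsubK) h𝒞subK
          hdABC hcover ?_ ?_
        · rw [hsum2]
          linarith
        · linarith
end

section
/- Let F₁, …, F_t be finite sets with pairwise disjoint elements, each of size at most (1/2 − ε)n where 0 ≤ ε ≤ 1/2 and the total size of all F_i is at most n. If there is no partition of the index set [t] into at most 3 blocks such that each block's union has size at most (1/2 − ε)n, then for any partition I₁ ⊎ … ⊎ I_k of [t] with k ≥ 4 minimizing k subject to each union ∪_{j∈I_l} F_j having size at most (1/2 − ε)n, the union of the two smallest blocks has size at most n/2 and strictly more than (1/2 − ε)n. -/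
open Finset

/-- Let `F₁, …, F_t` be pairwise disjoint finite sets, each of size at most
`(1/2 − ε)n` (`0 ≤ ε ≤ 1/2`), of total size at most `n`.  If no partition of `[t]` into at
most 3 blocks has every block-union of size at most `(1/2 − ε)n`, then in any partition
minimizing the number `k ≥ 4` of blocks subject to every block-union having size at most
`(1/2 − ε)n`, the union of the two smallest blocks has size at most `n/2` and strictly
more than `(1/2 − ε)n`. -/
theorem two_smallest_blocks {α : Type*} [DecidableEq α] {t n : ℕ} (ε : ℝ)
    (hε0 : 0 ≤ ε) (hε2 : ε ≤ 1/2) (F : Fin t → Finset α)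
    (hdisj : ∀ i j, i ≠ j → Disjoint (F i) (F j))
    (hsize : ∀ i, ((F i).card : ℝ) ≤ (1/2 - ε) * n)
    (htotal : ((∑ i, (F i).card : ℕ) : ℝ) ≤ n)
    (hno3 : ¬ ∃ P : Finpartition (Finset.univ : Finset (Fin t)),
        P.parts.card ≤ 3 ∧
        ∀ I ∈ P.parts, ((∑ j ∈ I, (F j).card : ℕ) : ℝ) ≤ (1/2 - ε) * n)
    (P : Finpartition (Finset.univ : Finset (Fin t)))
    (hP : ∀ I ∈ P.parts, ((∑ j ∈ I, (F j).card : ℕ) : ℝ) ≤ (1/2 - ε) * n)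
    (hk4 : 4 ≤ P.parts.card)
    (hmin : ∀ Q : Finpartition (Finset.univ : Finset (Fin t)),
        (∀ I ∈ Q.parts, ((∑ j ∈ I, (F j).card : ℕ) : ℝ) ≤ (1/2 - ε) * n) →
        P.parts.card ≤ Q.parts.card) :
    ∀ I₁ ∈ P.parts, ∀ I₂ ∈ P.parts, I₁ ≠ I₂ →
      (∀ J ∈ P.parts, J ≠ I₁ → J ≠ I₂ →
        (∑ j ∈ I₁, (F j).card) ≤ (∑ j ∈ J, (F j).card) ∧
        (∑ j ∈ I₂, (F j).card) ≤ (∑ j ∈ J, (F j).card)) →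
      ((∑ j ∈ I₁ ∪ I₂, (F j).card : ℕ) : ℝ) ≤ n / 2 ∧
      (1/2 - ε) * n < ((∑ j ∈ I₁ ∪ I₂, (F j).card : ℕ) : ℝ) := by
  intro I₁ hI₁ I₂ hI₂ h12 hmin2
  have hd12 : Disjoint I₁ I₂ := P.disjoint hI₁ hI₂ h12
  have hsum12 : ∑ j ∈ I₁ ∪ I₂, (F j).card
      = (∑ j ∈ I₁, (F j).card) + ∑ j ∈ I₂, (F j).card :=
    Finset.sum_union hd12
  have hpairsub : ({I₁, I₂} : Finset (Finset (Fin t))) ⊆ P.parts := by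
    intro J hJ
    rcases Finset.mem_insert.1 hJ with h | h
    · exact h ▸ hI₁
    · exact (Finset.mem_singleton.1 h) ▸ hI₂
  set rest := P.parts \ {I₁, I₂} with hrest
  have hT : ∑ I ∈ P.parts, ∑ j ∈ I, (F j).card = ∑ i, (F i).card := by
    conv_rhs => rw [← P.biUnion_parts]
    rw [Finset.sum_biUnion P.disjoint]
    simp only [id]
  have hTsplit : ∑ I ∈ P.parts, ∑ j ∈ I, (F j).card
      = (∑ I ∈ rest, ∑ j ∈ I, (F j).card)
        + ((∑ j ∈ I₁, (F j).card) + ∑ j ∈ I₂, (F j).card) := by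
    rw [hrest, ← Finset.sum_sdiff hpairsub]
    congr 1
    rw [Finset.sum_pair h12]
  -- upper bound
  have hrestcard : 2 ≤ rest.card := by
    have h2 : ({I₁, I₂} : Finset (Finset (Fin t))).card = 2 := by
      rw [Finset.card_insert_of_notMem (by simpa using h12), Finset.card_singleton]
    have h3 := Finset.card_sdiff_of_subset hpairsub
    rw [← hrest] at h3
    omega
  obtain ⟨J₃, hJ₃, J₄, hJ₄, hJ34⟩ := Finset.one_lt_card.1 (by omega : 1 < rest.card)
  have hrestge : (∑ j ∈ I₁, (F j).card) + (∑ j ∈ I₂, (F j).card)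
      ≤ ∑ I ∈ rest, ∑ j ∈ I, (F j).card := by
    have hsubJ : ({J₃, J₄} : Finset (Finset (Fin t))) ⊆ rest := by
      intro J hJ
      rcases Finset.mem_insert.1 hJ with h | h
      · exact h ▸ hJ₃
      · exact (Finset.mem_singleton.1 h) ▸ hJ₄
    have hsumJ : ∑ I ∈ ({J₃, J₄} : Finset (Finset (Fin t))), ∑ j ∈ I, (F j).card
        = (∑ j ∈ J₃, (F j).card) + ∑ j ∈ J₄, (F j).card := Finset.sum_pair hJ34
    have h3 := hmin2 J₃ (Finset.mem_sdiff.1 hJ₃).1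
      (by have := (Finset.mem_sdiff.1 hJ₃).2; simp at this; tauto)
      (by have := (Finset.mem_sdiff.1 hJ₃).2; simp at this; tauto)
    have h4 := hmin2 J₄ (Finset.mem_sdiff.1 hJ₄).1
      (by have := (Finset.mem_sdiff.1 hJ₄).2; simp at this; tauto)
      (by have := (Finset.mem_sdiff.1 hJ₄).2; simp at this; tauto)
    calc (∑ j ∈ I₁, (F j).card) + (∑ j ∈ I₂, (F j).card)
        ≤ (∑ j ∈ J₃, (F j).card) + ∑ j ∈ J₄, (F j).card := by
          exact Nat.add_le_add h3.1 h4.2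
      _ = ∑ I ∈ ({J₃, J₄} : Finset (Finset (Fin t))), ∑ j ∈ I, (F j).card := hsumJ.symm
      _ ≤ ∑ I ∈ rest, ∑ j ∈ I, (F j).card :=
          Finset.sum_le_sum_of_subset hsubJ
  have hupper : ((∑ j ∈ I₁ ∪ I₂, (F j).card : ℕ) : ℝ) ≤ n / 2 := by
    have hT' : (∑ I ∈ rest, ∑ j ∈ I, (F j).card)
        + ((∑ j ∈ I₁, (F j).card) + ∑ j ∈ I₂, (F j).card) = ∑ i, (F i).card := by
      rw [← hT, hTsplit]
    have h1R : (((∑ j ∈ I₁, (F j).card) + ∑ j ∈ I₂, (F j).card : ℕ) : ℝ)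
        ≤ ((∑ I ∈ rest, ∑ j ∈ I, (F j).card : ℕ) : ℝ) := Nat.cast_le.2 hrestge
    have hTR : (((∑ I ∈ rest, ∑ j ∈ I, (F j).card)
        + ((∑ j ∈ I₁, (F j).card) + ∑ j ∈ I₂, (F j).card) : ℕ) : ℝ)
        = ((∑ i, (F i).card : ℕ) : ℝ) := by exact_mod_cast hT'
    have h2 := htotal
    rw [hsum12]
    push_cast at h1R hTR h2 ⊢
    linarith
  refine ⟨hupper, ?_⟩
  -- lower bound: by contradiction, merge I₁ and I₂
  by_contra hle
  push_neg at hle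
  classical
  set parts' : Finset (Finset (Fin t)) := insert (I₁ ∪ I₂) rest with hparts'
  have hmemP : ∀ J ∈ rest, J ∈ P.parts ∧ J ≠ I₁ ∧ J ≠ I₂ := by
    intro J hJ
    have := Finset.mem_sdiff.1 hJ
    simp at this
    tauto
  have hsupindep : parts'.SupIndep id := by
    rw [Finset.supIndep_iff_pairwiseDisjoint]
    intro J hJ K hK hne
    simp only [hparts', Finset.coe_insert, Set.mem_insert_iff, Finset.mem_coe] at hJ hK
    rcases hJ with hJ | hJ <;> rcases hK with hK | hK
    · exact absurd (hJ.trans hK.symm) hne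
    · subst hJ
      obtain ⟨hKP, hK1, hK2⟩ := hmemP K hK
      exact Finset.disjoint_union_left.2
        ⟨P.disjoint hI₁ hKP (Ne.symm hK1), P.disjoint hI₂ hKP (Ne.symm hK2)⟩
    · subst hK
      obtain ⟨hJP, hJ1, hJ2⟩ := hmemP J hJ
      exact Finset.disjoint_union_right.2
        ⟨P.disjoint hJP hI₁ hJ1, P.disjoint hJP hI₂ hJ2⟩
    · exact P.disjoint (hmemP J hJ).1 (hmemP K hK).1 hne
  have hsup : parts'.sup id = (Finset.univ : Finset (Fin t)) := by
    apply le_antisymm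
    · exact Finset.sup_le fun J _ => Finset.subset_univ J
    · intro x _
      obtain ⟨J, hJP, hxJ⟩ := P.exists_mem (Finset.mem_univ x)
      rw [Finset.mem_sup]
      by_cases hJ1 : J = I₁
      · exact ⟨I₁ ∪ I₂, Finset.mem_insert_self _ _,
          Finset.mem_union_left _ (hJ1 ▸ hxJ)⟩
      · by_cases hJ2 : J = I₂
        · exact ⟨I₁ ∪ I₂, Finset.mem_insert_self _ _,
            Finset.mem_union_right _ (hJ2 ▸ hxJ)⟩
        · exact ⟨J, Finset.mem_insert_of_mem (Finset.mem_sdiff.2 ⟨hJP, by simp [hJ1, hJ2]⟩), hxJ⟩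
  let Q : Finpartition (Finset.univ : Finset (Fin t)) :=
    Finpartition.ofErase parts' hsupindep hsup
  have hQparts : Q.parts = parts'.erase ⊥ := rfl
  have hQbound : ∀ I ∈ Q.parts, ((∑ j ∈ I, (F j).card : ℕ) : ℝ) ≤ (1/2 - ε) * n := by
    intro I hI
    have hI' : I ∈ parts' := Finset.mem_of_mem_erase (hQparts ▸ hI)
    rcases Finset.mem_insert.1 hI' with h | h
    · subst h
      exact hle
    · exact hP I (hmemP I h).1
  have hQcard : Q.parts.card ≤ P.parts.card - 1 := by
    have h1 : Q.parts.card ≤ parts'.card := by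
      rw [hQparts]; exact Finset.card_le_card (Finset.erase_subset _ _)
    have h2 : parts'.card ≤ rest.card + 1 := Finset.card_insert_le _ _
    have h3 : rest.card = P.parts.card - 2 := by
      rw [hrest, Finset.card_sdiff_of_subset hpairsub]
      congr 1
      rw [Finset.card_insert_of_notMem (by simpa using h12), Finset.card_singleton]
    omega
  have := hmin Q hQbound
  omega
end

section
/- Let G₀, …, G_{k−1} be bipartite graphs whose pairwise intersections all equal a single common vertex g, and let G be their union. If each Gᵢ admits a well-begun lᵢ-encoding, then G admits a well-begun l-encoding with l = max_i lᵢ + ⌈log₂ k⌉. -/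
/-- `φ : V → Fin l → ℕ` is an `l`-encoding of `G`. -/
def IsEncoding {V : Type*} (G : SimpleGraph V) (l : ℕ) (φ : V → Fin l → ℕ) : Prop :=
  Function.Injective φ ∧ ∀ u v : V, u ≠ v → (G.Adj u v ↔ ∀ i, φ u i ≠ φ v i)

/-- An encoding is well-begun if its first coordinate takes values in
`{0, …, χ(G) − 1}`. -/
def IsWellBegun {V : Type*} (G : SimpleGraph V) (l : ℕ) (φ : V → Fin l → ℕ) : Prop :=
  ∀ v : V, ∀ h : 0 < l, ((φ v ⟨0, h⟩ : ℕ) : ℕ∞) < G.chromaticNumber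

lemma aux_xor01 {a b : ℕ} (ha : a ≤ 1) (hb : b ≤ 1) (x y : Bool) :
    a ^^^ x.toNat = b ^^^ y.toNat ↔ (a = b ↔ x = y) := by
  interval_cases a <;> interval_cases b <;> cases x <;> cases y <;> decide

lemma aux_xor_le {a : ℕ} (ha : a ≤ 1) (x : Bool) : a ^^^ x.toNat ≤ 1 := by
  interval_cases a <;> cases x <;> decide

lemma aux_bits {k : ℕ} (i j : Fin k) (hij : i ≠ j) :
    ∃ t, t < Nat.clog 2 k ∧ Nat.testBit i t ≠ Nat.testBit j t := by
  by_contra h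
  push_neg at h
  apply hij
  apply Fin.ext
  apply Nat.eq_of_testBit_eq
  intro t
  by_cases ht : t < Nat.clog 2 k
  · exact h t ht
  · have hk2 : k ≤ 2 ^ Nat.clog 2 k := Nat.le_pow_clog one_lt_two k
    have h2 : (2:ℕ) ^ Nat.clog 2 k ≤ 2 ^ t := Nat.pow_le_pow_right (by norm_num) (le_of_not_gt ht)
    rw [Nat.testBit_eq_false_of_lt (lt_of_lt_of_le i.2 (hk2.trans h2)),
        Nat.testBit_eq_false_of_lt (lt_of_lt_of_le j.2 (hk2.trans h2))]

lemma aux_adj_two {V : Type*} (G : SimpleGraph V) {u v : V} (h : G.Adj u v) :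
    (1:ℕ∞) < G.chromaticNumber := by
  by_contra hc
  push_neg at hc
  rw [show ((1:ℕ∞)) = ((1:ℕ):ℕ∞) from rfl, SimpleGraph.chromaticNumber_le_iff_colorable] at hc
  obtain ⟨C⟩ := hc
  exact (C.valid h) (Subsingleton.elim _ _)

/-- Amalgamation Lemma for Bipartite Graphs.  Let `G₀, …, G_{k−1}` be
bipartite graphs whose pairwise intersections all equal a single common vertex `g`, and
let `G` be their union.  If each `Gᵢ` admits a well-begun `lᵢ`-encoding, then `G` admits
a well-begun `l`-encoding with `l = max_i lᵢ + ⌈log₂ k⌉`. -/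
theorem bipartite_amalgamation {V : Type*} [Fintype V] (G : SimpleGraph V)
    {k : ℕ} (hk : 0 < k) (g : V) (S : Fin k → Set V)
    (hg : ∀ i, g ∈ S i)
    (hinter : ∀ i j, i ≠ j → S i ∩ S j = {g})
    (hcover : (⋃ i, S i) = Set.univ)
    (hedges : ∀ u v : V, G.Adj u v → ∃ i, u ∈ S i ∧ v ∈ S i)
    (hbip : ∀ i, (G.induce (S i)).Colorable 2)
    (l : Fin k → ℕ)
    (henc : ∀ i, ∃ φ : (S i) → Fin (l i) → ℕ,
      IsEncoding (G.induce (S i)) (l i) φ ∧ IsWellBegun (G.induce (S i)) (l i) φ) :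
    ∃ φ : V → Fin (Finset.univ.sup l + Nat.clog 2 k) → ℕ,
      IsEncoding G (Finset.univ.sup l + Nat.clog 2 k) φ ∧
      IsWellBegun G (Finset.univ.sup l + Nat.clog 2 k) φ := by
  classical
  have hGcol : ∃ n, G.Colorable n := ⟨_, G.colorable_of_fintype⟩
  have hGpos : (0:ℕ∞) < G.chromaticNumber := by
    have : Nonempty V := ⟨g⟩
    exact SimpleGraph.chromaticNumber_pos G.colorable_of_fintype
  -- trivial case: single vertex
  by_cases hsing : ∀ v : V, v = g
  · refine ⟨fun _ _ => 0, ⟨fun u v _ => (hsing u).trans (hsing v).symm, ?_⟩, ?_⟩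
    · intro u v huv
      exact absurd ((hsing u).trans (hsing v).symm) huv
    · intro v h
      simpa using hGpos
  push_neg at hsing
  obtain ⟨v0, hv0⟩ := hsing
  set L1 := Finset.univ.sup l with hL1
  set L2 := Nat.clog 2 k with hL2
  have hle : ∀ i, l i ≤ L1 := fun i => Finset.le_sup (Finset.mem_univ i)
  -- chromatic numbers of the pieces
  have hχle : ∀ i, (G.induce (S i)).chromaticNumber ≤ G.chromaticNumber := fun i =>
    SimpleGraph.chromaticNumber_mono_of_hom (SimpleGraph.Embedding.induce (S i)).toHom
  have hχ2 : ∀ i, (G.induce (S i)).chromaticNumber ≤ (2:ℕ) := fun i =>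
    (hbip i).chromaticNumber_le
  -- choose and normalize encodings
  choose φ0 hφ0 using henc
  set ψ : ∀ i, (S i) → Fin (l i) → ℕ :=
    fun i v t => Equiv.swap (φ0 i ⟨g, hg i⟩ t) 0 (φ0 i v t) with hψdef
  have hψinj : ∀ i, Function.Injective (ψ i) := by
    intro i u v huv
    apply (hφ0 i).1.1
    funext t
    have := congrFun huv t
    simpa [hψdef] using (Equiv.swap (φ0 i ⟨g, hg i⟩ t) 0).injective this
  have hψadj : ∀ i (u v : (S i)), u ≠ v →
      ((G.induce (S i)).Adj u v ↔ ∀ t, ψ i u t ≠ ψ i v t) := by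
    intro i u v huv
    rw [(hφ0 i).1.2 u v huv]
    constructor
    · intro h t he
      exact h t ((Equiv.swap (φ0 i ⟨g, hg i⟩ t) 0).injective he)
    · intro h t he
      exact h t (by simp [hψdef, he])
  have hψg : ∀ i (t : Fin (l i)), ψ i ⟨g, hg i⟩ t = 0 := by
    intro i t
    simp [hψdef]
  have hψwb : ∀ i (v : (S i)) (h : 0 < l i),
      ((ψ i v ⟨0, h⟩ : ℕ) : ℕ∞) < (G.induce (S i)).chromaticNumber := by
    intro i v h
    have hgwb := (hφ0 i).2 ⟨g, hg i⟩ h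
    have hvwb := (hφ0 i).2 v h
    have hpos : (0:ℕ∞) < (G.induce (S i)).chromaticNumber := by
      have : Nonempty (S i) := ⟨⟨g, hg i⟩⟩
      exact SimpleGraph.chromaticNumber_pos (hbip i)
    rw [hψdef]
    simp only [Equiv.swap_apply_def]
    split_ifs
    · simpa using hpos
    · exact hgwb
    · exact hvwb
  have hψ01 : ∀ i (v : (S i)) (h : 0 < l i), ψ i v ⟨0, h⟩ ≤ 1 := by
    intro i v h
    have := lt_of_lt_of_le (hψwb i v h) (hχ2 i)
    rw [Nat.cast_lt] at this
    omega
  -- if a piece's encoding length is 0, the piece is a singleton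
  have hsub : ∀ i (u v : (S i)), l i = 0 → u = v := by
    intro i u v h0
    apply hψinj i
    funext t
    exact absurd t.2 (by omega)
  -- the index of each vertex
  have hmem : ∀ v : V, ∃ i, v ∈ S i := by
    intro v
    have : v ∈ ⋃ i, S i := hcover ▸ Set.mem_univ v
    simpa [Set.mem_iUnion] using this
  choose idx hidx using hmem
  have hidxu : ∀ (v : V), v ≠ g → ∀ j, v ∈ S j → j = idx v := by
    intro v hv j hj
    by_contra hne
    have : v ∈ S j ∩ S (idx v) := ⟨hj, hidx v⟩
    rw [hinter j (idx v) hne] at this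
    exact hv this
  have hlpos : ∀ v : V, v ≠ g → 0 < l (idx v) := by
    intro v hv
    rcases Nat.eq_zero_or_pos (l (idx v)) with h0 | h
    · exact absurd (congrArg Subtype.val (hsub (idx v) ⟨v, hidx v⟩ ⟨g, hg _⟩ h0)) hv
    · exact h
  -- colors
  set c : V → ℕ := fun v =>
    if h : 0 < l (idx v) then ψ (idx v) ⟨v, hidx v⟩ ⟨0, h⟩ else 0 with hcdef
  have hcv : ∀ v, c v = if h : 0 < l (idx v) then ψ (idx v) ⟨v, hidx v⟩ ⟨0, h⟩ else 0 :=
    fun v => rfl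
  have hc1 : ∀ v, c v ≤ 1 := by
    intro v
    rw [hcv]
    split_ifs with h
    · exact hψ01 _ _ h
    · omega
  have hcg : c g = 0 := by
    rw [hcv]
    split_ifs with h
    · exact hψg (idx g) ⟨0, h⟩
    · rfl
  have hcwb : ∀ v : V, ((c v : ℕ) : ℕ∞) < G.chromaticNumber := by
    intro v
    rw [hcv]
    split_ifs with h
    · exact lt_of_lt_of_le (hψwb _ _ h) (hχle _)
    · simpa using hGpos
  have hL1pos : 0 < L1 := lt_of_lt_of_le (hlpos v0 hv0) (hle (idx v0))
  -- the encoding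
  set Φ : V → Fin (L1 + L2) → ℕ := fun v t =>
    if v = g then (if (t:ℕ) < L1 then 0 else 2)
    else if h : (t:ℕ) < l (idx v) then ψ (idx v) ⟨v, hidx v⟩ ⟨(t:ℕ), h⟩
    else if (t:ℕ) < L1 then c v
    else c v ^^^ (Nat.testBit (idx v) ((t:ℕ) - L1)).toNat with hΦdef
  -- value lemmas
  have hΦg1 : ∀ (t : Fin (L1 + L2)), (t:ℕ) < L1 → Φ g t = 0 := by
    intro t ht; simp [hΦdef, ht]
  have hΦg2 : ∀ (t : Fin (L1 + L2)), ¬ (t:ℕ) < L1 → Φ g t = 2 := by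
    intro t ht; simp [hΦdef, ht]
  have hΦpad : ∀ (v : V) (hv : v ≠ g) (t : Fin (L1 + L2)),
      ¬ (t:ℕ) < l (idx v) → (t:ℕ) < L1 → Φ v t = c v := by
    intro v hv t h1 h2
    rw [hΦdef]
    simp only [if_neg hv, dif_neg h1, if_pos h2]
  have hΦxor : ∀ (v : V) (hv : v ≠ g) (t : Fin (L1 + L2)), ¬ (t:ℕ) < L1 →
      Φ v t = c v ^^^ (Nat.testBit (idx v) ((t:ℕ) - L1)).toNat := by
    intro v hv t h2
    have h1 : ¬ (t:ℕ) < l (idx v) := fun hlt => h2 (lt_of_lt_of_le hlt (hle _))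
    rw [hΦdef]
    simp only [if_neg hv, dif_neg h1, if_neg h2]
  -- uniform row lemma: on a common piece, Φ restricted to the first l i coords is ψ i
  have hrow : ∀ (i : Fin k) (u : V) (hu : u ∈ S i) (t : Fin (L1 + L2))
      (h : (t:ℕ) < l i), Φ u t = ψ i ⟨u, hu⟩ ⟨(t:ℕ), h⟩ := by
    intro i u hu t h
    by_cases hug : u = g
    · subst hug
      rw [hΦg1 t (lt_of_lt_of_le h (hle i))]
      exact (hψg i ⟨(t:ℕ), h⟩).symm
    · have e : i = idx u := hidxu u hug i hu
      subst e
      rw [hΦdef]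
      simp only [if_neg hug, dif_pos h]
  have hcrow : ∀ (i : Fin k) (u : V) (hu : u ∈ S i) (h : 0 < l i),
      c u = ψ i ⟨u, hu⟩ ⟨0, h⟩ := by
    intro i u hu h
    by_cases hug : u = g
    · subst hug
      rw [hcg]
      exact (hψg i ⟨0, h⟩).symm
    · have e : i = idx u := hidxu u hug i hu
      subst e
      rw [hcv]
      simp only [dif_pos h]
  have hΦ0 : ∀ (v : V) (hv : v ≠ g) (h0 : 0 < L1 + L2),
      Φ v ⟨0, h0⟩ = c v := by
    intro v hv h0
    have hp := hlpos v hv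
    rw [hrow (idx v) v (hidx v) ⟨0, h0⟩ hp, hcrow (idx v) v (hidx v) hp]
  -- induced adjacency
  have hadj_ind : ∀ (i : Fin k) (u v : (S i)),
      (G.induce (S i)).Adj u v ↔ G.Adj (u:V) (v:V) := by
    intro i u v; simp [SimpleGraph.comap_adj]
  -- non-adjacency across distinct pieces
  have hnadj : ∀ (u v : V), u ≠ g → v ≠ g → idx u ≠ idx v → ¬ G.Adj u v := by
    intro u v hu hv hne hadj
    obtain ⟨m, hmu, hmv⟩ := hedges u v hadj
    exact hne ((hidxu u hu m hmu).symm.trans (hidxu v hv m hmv))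
  -- Fact A: same-piece characterization
  have factA : ∀ (i : Fin k) (u v : V) (hu : u ∈ S i) (hv : v ∈ S i), u ≠ v →
      (G.Adj u v ↔ ∀ t, Φ u t ≠ Φ v t) := by
    intro i u v hu hv huv
    have hsne : (⟨u, hu⟩ : (S i)) ≠ ⟨v, hv⟩ := fun h => huv (congrArg Subtype.val h)
    have hlip : 0 < l i := by
      rcases Nat.eq_zero_or_pos (l i) with h0 | h
      · exact absurd (congrArg Subtype.val (hsub i ⟨u, hu⟩ ⟨v, hv⟩ h0)) huv
      · exact h
    constructor
    · intro hadj t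
      have hψne : ∀ t', ψ i ⟨u, hu⟩ t' ≠ ψ i ⟨v, hv⟩ t' :=
        (hψadj i ⟨u, hu⟩ ⟨v, hv⟩ hsne).1 ((hadj_ind i _ _).2 hadj)
      have hcne : c u ≠ c v := by
        rw [hcrow i u hu hlip, hcrow i v hv hlip]
        exact hψne ⟨0, hlip⟩
      by_cases h1 : (t:ℕ) < l i
      · rw [hrow i u hu t h1, hrow i v hv t h1]
        exact hψne _
      · -- beyond the piece coordinates
        by_cases hug : u = g
        · have hvg : v ≠ g := fun h => huv (hug.trans h.symm)
          have hvc : c v ≠ 0 := fun h => hcne (by rw [hug, hcg, h])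
          have e : i = idx v := hidxu v hvg i hv
          have h1' : ¬ (t:ℕ) < l (idx v) := by rw [← e]; exact h1
          by_cases h2 : (t:ℕ) < L1
          · rw [hug, hΦg1 t h2, hΦpad v hvg t h1' h2]
            exact fun h => hvc h.symm
          · rw [hug, hΦg2 t h2, hΦxor v hvg t h2]
            have := aux_xor_le (hc1 v) (Nat.testBit (idx v) ((t:ℕ) - L1))
            omega
        · by_cases hvg : v = g
          · have huc : c u ≠ 0 := fun h => hcne (by rw [h, hvg, hcg])
            have e : i = idx u := hidxu u hug i hu
            have h1' : ¬ (t:ℕ) < l (idx u) := by rw [← e]; exact h1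
            by_cases h2 : (t:ℕ) < L1
            · rw [hvg, hΦg1 t h2, hΦpad u hug t h1' h2]
              exact huc
            · rw [hvg, hΦg2 t h2, hΦxor u hug t h2]
              have := aux_xor_le (hc1 u) (Nat.testBit (idx u) ((t:ℕ) - L1))
              omega
          · have eu : i = idx u := hidxu u hug i hu
            have ev : i = idx v := hidxu v hvg i hv
            have h1u : ¬ (t:ℕ) < l (idx u) := by rw [← eu]; exact h1
            have h1v : ¬ (t:ℕ) < l (idx v) := by rw [← ev]; exact h1
            by_cases h2 : (t:ℕ) < L1
            · rw [hΦpad u hug t h1u h2, hΦpad v hvg t h1v h2]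
              exact hcne
            · rw [hΦxor u hug t h2, hΦxor v hvg t h2, ← eu, ← ev]
              intro h
              exact hcne (((aux_xor01 (hc1 u) (hc1 v) _ _).1 h).2 rfl)
    · intro hne
      by_contra hadj
      have hψe : ∃ t', ψ i ⟨u, hu⟩ t' = ψ i ⟨v, hv⟩ t' := by
        by_contra hno
        push_neg at hno
        exact hadj ((hadj_ind i _ _).1 ((hψadj i ⟨u, hu⟩ ⟨v, hv⟩ hsne).2 hno))
      obtain ⟨t', ht'⟩ := hψe
      have htlt : (t':ℕ) < L1 + L2 := lt_of_lt_of_le (lt_of_lt_of_le t'.2 (hle i)) (Nat.le_add_right _ _)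
      apply hne ⟨(t':ℕ), htlt⟩
      rw [hrow i u hu ⟨(t':ℕ), htlt⟩ t'.2, hrow i v hv ⟨(t':ℕ), htlt⟩ t'.2]
      simpa using ht'
  refine ⟨Φ, ⟨?_, ?_⟩, ?_⟩
  · -- injectivity
    intro u v huv
    by_contra hne
    by_cases hug : u = g
    · apply hne
      rw [hug]
      have key : (⟨g, hg (idx v)⟩ : (S (idx v))) = ⟨v, hidx v⟩ := by
        apply hψinj (idx v)
        funext t'
        have htlt : (t':ℕ) < L1 + L2 :=
          lt_of_lt_of_le (lt_of_lt_of_le t'.2 (hle (idx v))) (Nat.le_add_right _ _)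
        have h1 := hrow (idx v) g (hg (idx v)) ⟨(t':ℕ), htlt⟩ t'.2
        have h2 := hrow (idx v) v (hidx v) ⟨(t':ℕ), htlt⟩ t'.2
        have := congrFun huv ⟨(t':ℕ), htlt⟩
        rw [hug, h1, h2] at this
        simpa using this
      exact congrArg Subtype.val key
    · by_cases hvg : v = g
      · apply hne
        rw [hvg]
        have key : (⟨u, hidx u⟩ : (S (idx u))) = ⟨g, hg (idx u)⟩ := by
          apply hψinj (idx u)
          funext t'
          have htlt : (t':ℕ) < L1 + L2 :=
            lt_of_lt_of_le (lt_of_lt_of_le t'.2 (hle (idx u))) (Nat.le_add_right _ _)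
          have h1 := hrow (idx u) u (hidx u) ⟨(t':ℕ), htlt⟩ t'.2
          have h2 := hrow (idx u) g (hg (idx u)) ⟨(t':ℕ), htlt⟩ t'.2
          have := congrFun huv ⟨(t':ℕ), htlt⟩
          rw [hvg, h1, h2] at this
          simpa using this
        exact congrArg Subtype.val key
      · by_cases hii : idx u = idx v
        · apply hne
          have hvm : v ∈ S (idx u) := hii ▸ hidx v
          have : (⟨u, hidx u⟩ : (S (idx u))) = ⟨v, hvm⟩ := by
            apply hψinj (idx u)
            funext t'
            have htlt : (t':ℕ) < L1 + L2 :=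
              lt_of_lt_of_le (lt_of_lt_of_le t'.2 (hle (idx u))) (Nat.le_add_right _ _)
            have h1 := hrow (idx u) u (hidx u) ⟨(t':ℕ), htlt⟩ t'.2
            have h2 := hrow (idx u) v hvm ⟨(t':ℕ), htlt⟩ t'.2
            have := congrFun huv ⟨(t':ℕ), htlt⟩
            rw [h1, h2] at this
            simpa using this
          exact congrArg Subtype.val this
        · -- distinct pieces: colors equal, then bits equal, contradiction
          have h0 : 0 < L1 + L2 := lt_of_lt_of_le hL1pos (Nat.le_add_right _ _)
          have hceq : c u = c v := by
            have := congrFun huv ⟨0, h0⟩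
            rwa [hΦ0 u hug h0, hΦ0 v hvg h0] at this
          obtain ⟨t0, ht0, hbne⟩ := aux_bits (idx u) (idx v) hii
          have htlt : L1 + t0 < L1 + L2 := by omega
          have hnl : ¬ ((⟨L1 + t0, htlt⟩ : Fin (L1 + L2)) : ℕ) < L1 := by simp
          have := congrFun huv ⟨L1 + t0, htlt⟩
          rw [hΦxor u hug _ hnl, hΦxor v hvg _ hnl] at this
          simp only [show L1 + t0 - L1 = t0 from by omega] at this
          exact hbne (((aux_xor01 (hc1 u) (hc1 v) _ _).1 this).1 hceq)
  · -- adjacency characterization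
    intro u v huv
    by_cases hcom : ∃ i, u ∈ S i ∧ v ∈ S i
    · obtain ⟨i, hu, hv⟩ := hcom
      exact factA i u v hu hv huv
    · have hug : u ≠ g := by
        rintro rfl
        exact hcom ⟨idx v, hg _, hidx v⟩
      have hvg : v ≠ g := by
        rintro rfl
        exact hcom ⟨idx u, hidx u, hg _⟩
      have hii : idx u ≠ idx v := by
        intro h
        exact hcom ⟨idx u, hidx u, h ▸ hidx v⟩
      constructor
      · intro hadj
        exact absurd hadj (hnadj u v hug hvg hii)
      · intro hne
        exfalso
        by_cases hceq : c u = c v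
        · have h0 : 0 < L1 + L2 := lt_of_lt_of_le hL1pos (Nat.le_add_right _ _)
          apply hne ⟨0, h0⟩
          rw [hΦ0 u hug h0, hΦ0 v hvg h0]
          exact hceq
        · obtain ⟨t0, ht0, hbne⟩ := aux_bits (idx u) (idx v) hii
          have htlt : L1 + t0 < L1 + L2 := by omega
          have hnl : ¬ ((⟨L1 + t0, htlt⟩ : Fin (L1 + L2)) : ℕ) < L1 := by simp
          apply hne ⟨L1 + t0, htlt⟩
          rw [hΦxor u hug _ hnl, hΦxor v hvg _ hnl]
          simp only [show L1 + t0 - L1 = t0 from by omega]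
          exact (aux_xor01 (hc1 u) (hc1 v) _ _).2
            ⟨fun h => absurd h hceq, fun h => absurd h hbne⟩
  · -- well-begun
    intro v h0
    by_cases hvg : v = g
    · rw [hvg, hΦg1 ⟨0, h0⟩ hL1pos]
      simpa using hGpos
    · rw [hΦ0 v hvg h0]
      exact hcwb v
end

section
/- Let G be a graph on n vertices with a normalized tree decomposition ({X_i : i ∈ I}, r, T) of width t. Then there exists a node l ∈ I such that the graph G \ X_l is a disjoint union of three (possibly empty) subgraphs G₁, G₂, G₃ with no edges between them, each having at most (n − |X_l| + 1)/2 vertices. -/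
section Aux
open SimpleGraph Finset


section TreeHelpers

variable {I : Type*} [DecidableEq I] {T : SimpleGraph I}
variable {P : ∀ a b : I, T.Walk a b}

/-- any walk contains the support of the canonical path -/
lemma H1 (hPU : ∀ (a b : I) (q : T.Walk a b), q.IsPath → q = P a b)
    {a b c : I} (h : c ∈ (P a b).support) (w : T.Walk a b) : c ∈ w.support := by
  have hb : w.bypass = P a b := hPU a b w.bypass w.bypass_isPath
  exact w.support_bypass_subset (by rw [hb]; exact h)

/-- splitting the canonical path at an interior vertex -/
lemma H2 (hP : ∀ a b, (P a b).IsPath)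
    (hPU : ∀ (a b : I) (q : T.Walk a b), q.IsPath → q = P a b)
    {a b c : I} (h : c ∈ (P a b).support) :
    P a b = (P a c).append (P c b) := by
  have h1 : (P a b).takeUntil c h = P a c :=
    hPU a c _ ((hP a b).takeUntil h)
  have h2 : (P a b).dropUntil c h = P c b :=
    hPU c b _ ((hP a b).dropUntil h)
  rw [← h1, ← h2]
  exact ((P a b).take_spec h).symm

lemma H2mem (hP : ∀ a b, (P a b).IsPath)
    (hPU : ∀ (a b : I) (q : T.Walk a b), q.IsPath → q = P a b)
    {a b c x : I} (h : c ∈ (P a b).support) :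
    x ∈ (P a b).support ↔ x ∈ (P a c).support ∨ x ∈ (P c b).support := by
  rw [H2 hP hPU h, SimpleGraph.Walk.mem_support_append_iff]

/-- if p = q ++ s is a path then a vertex in both halves is the midpoint -/
lemma Hcore {a b c x : I} {q : T.Walk a c} {s : T.Walk c b}
    (hpath : (q.append s).IsPath) (hq : x ∈ q.support) (hs : x ∈ s.support) : x = c := by
  have hnd := hpath.support_nodup
  rw [SimpleGraph.Walk.support_append] at hnd
  have hdisj := (List.nodup_append.mp hnd).2.2
  by_contra hne
  have : x ∈ s.support.tail := by
    have hcons := s.support_eq_cons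
    rw [hcons] at hs
    rcases List.mem_cons.mp hs with h | h
    · exact absurd h hne
    · exact h
  exact hdisj x hq x this rfl

lemma H3 (hP : ∀ a b, (P a b).IsPath)
    (hPU : ∀ (a b : I) (q : T.Walk a b), q.IsPath → q = P a b)
    {r j l : I} (h1 : j ∈ (P r l).support) (h2 : l ∈ (P r j).support) : j = l := by
  have hsplit := H2 hP hPU h1
  have hpath : ((P r j).append (P j l)).IsPath := by rw [← hsplit]; exact hP r l
  exact (Hcore hpath h2 (SimpleGraph.Walk.end_mem_support _)).symm

lemma H4 (hP : ∀ a b, (P a b).IsPath)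
    (hPU : ∀ (a b : I) (q : T.Walk a b), q.IsPath → q = P a b)
    {r j l : I} (hadj : T.Adj l j) (h : l ∉ (P r j).support) :
    j ∈ (P r l).support := by
  have hcons : (SimpleGraph.Walk.cons hadj ((P r j).reverse)).IsPath := by
    refine SimpleGraph.Walk.IsPath.cons ((hP r j).reverse) ?_
    rw [SimpleGraph.Walk.support_reverse]
    simpa using h
  have hrev : (SimpleGraph.Walk.cons hadj ((P r j).reverse)).reverse = P r l :=
    hPU r l _ (hcons.reverse)
  rw [← hrev, SimpleGraph.Walk.support_reverse, List.mem_reverse,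
    SimpleGraph.Walk.support_cons]
  right
  rw [SimpleGraph.Walk.support_reverse]
  exact List.mem_reverse.mpr (SimpleGraph.Walk.end_mem_support _)

lemma H7 (hP : ∀ a b, (P a b).IsPath)
    {r j l : I} (hj : j ∈ (P r l).support) (hne : j ≠ l) :
    l ∉ ((P r l).takeUntil j hj).support := by
  intro hl
  have hpath : (((P r l).takeUntil j hj).append ((P r l).dropUntil j hj)).IsPath := by
    rw [(P r l).take_spec hj]; exact hP r l
  have := Hcore hpath hl (SimpleGraph.Walk.end_mem_support _)
  exact hne this.symm

lemma H5 (hP : ∀ a b, (P a b).IsPath)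
    (hPU : ∀ (a b : I) (q : T.Walk a b), q.IsPath → q = P a b)
    {r j k l : I} (hadj : T.Adj l j) (hrj : l ∈ (P r j).support)
    (w : T.Walk j k) (hw : l ∉ w.support) :
    j ∈ (P l k).support ∧ l ∈ (P r k).support ∧ j ∈ (P r k).support := by
  have hlk : l ∈ (P r k).support := by
    by_contra hl
    have hnot : l ∉ ((P r k).append w.reverse).support := by
      rw [SimpleGraph.Walk.mem_support_append_iff]
      push_neg
      exact ⟨hl, by rw [SimpleGraph.Walk.support_reverse]; simpa using hw⟩
    exact hnot (H1 hPU hrj _)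
  have hwb : l ∉ w.bypass.support := fun h => hw (w.support_bypass_subset h)
  have hcons : (SimpleGraph.Walk.cons hadj w.bypass).IsPath :=
    SimpleGraph.Walk.IsPath.cons (w.bypass_isPath) hwb
  have heq : SimpleGraph.Walk.cons hadj w.bypass = P l k := hPU l k _ hcons
  have hjlk : j ∈ (P l k).support := by
    rw [← heq, SimpleGraph.Walk.support_cons]
    exact List.mem_cons_of_mem _ (SimpleGraph.Walk.start_mem_support _)
  exact ⟨hjlk, hlk, (H2mem hP hPU hlk).mpr (Or.inr hjlk)⟩

lemma H6 (hP : ∀ a b, (P a b).IsPath)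
    (hPU : ∀ (a b : I) (q : T.Walk a b), q.IsPath → q = P a b)
    {r j k l : I} (h1 : l ∈ (P r j).support) (h2 : j ∈ (P r k).support)
    (hne : l ≠ j) : l ∈ (P r k).support ∧ j ∈ (P l k).support := by
  have hlk : l ∈ (P r k).support := (H2mem hP hPU h2).mpr (Or.inl h1)
  rcases (H2mem hP hPU hlk).mp h2 with h | h
  · exact absurd (H3 hP hPU h h1) (Ne.symm hne)
  · exact ⟨hlk, h⟩

end TreeHelpers

lemma keylt1 (n a b c d : ℕ) (h1 : a < b) (h2 : c ≤ n + 1) :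
    (n+2)*a + c < (n+2)*b + d := by nlinarith

lemma keylt2 (n a b c d : ℕ) (h1 : a ≤ b) (h2 : c < d) :
    (n+2)*a + c < (n+2)*b + d := by nlinarith

lemma symm_cases {V : Type*} [DecidableEq V] (s t : Finset V)
    (h : (symmDiff s t).card = 1) :
    (s ⊆ t ∧ (t \ s).card = 1 ∧ t.card = s.card + 1) ∨
    (t ⊆ s ∧ (s \ t).card = 1 ∧ s.card = t.card + 1) := by
  have hd : Disjoint (s \ t) (t \ s) := disjoint_sdiff_sdiff
  have hcard : (s \ t).card + (t \ s).card = 1 := by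
    rw [← card_union_of_disjoint hd]
    have hsd : symmDiff s t = s \ t ∪ t \ s := by
      rw [symmDiff_def]; rfl
    rw [← hsd, h]
  rcases Nat.eq_zero_or_pos (s \ t).card with h0 | hpos
  · left
    have hsub : s ⊆ t := by
      rw [← Finset.sdiff_eq_empty_iff_subset]
      exact Finset.card_eq_zero.mp h0
    have h1 : (t \ s).card = 1 := by omega
    refine ⟨hsub, h1, ?_⟩
    have := Finset.card_sdiff_of_subset hsub
    have := Finset.card_le_card hsub
    omega
  · right
    have h0 : (t \ s).card = 0 := by omega
    have hsub : t ⊆ s := by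
      rw [← Finset.sdiff_eq_empty_iff_subset]
      exact Finset.card_eq_zero.mp h0
    have h1 : (s \ t).card = 1 := by omega
    refine ⟨hsub, h1, ?_⟩
    have := Finset.card_sdiff_of_subset hsub
    have := Finset.card_le_card hsub
    omega

lemma pack3 {ι : Type*} [DecidableEq ι] (J : Finset ι) (w : ι → ℕ) (m : ℕ)
    (hw : ∀ j ∈ J, 2 * w j ≤ m) (hs : ∑ j ∈ J, w j ≤ m) :
    ∃ A B C : Finset ι, A ∪ B ∪ C = J ∧ Disjoint A B ∧ Disjoint A C ∧ Disjoint B C ∧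
      2 * ∑ j ∈ A, w j ≤ m + 1 ∧ 2 * ∑ j ∈ B, w j ≤ m + 1 ∧ 2 * ∑ j ∈ C, w j ≤ m + 1 := by
  classical
  set F := J.powerset.filter (fun A => 2 * ∑ j ∈ A, w j ≤ m + 1) with hF
  have hne : F.Nonempty := ⟨∅, by simp [hF]⟩
  obtain ⟨A, hAF, hAmax⟩ := F.exists_max_image
    (fun A => (m + 2) * (∑ j ∈ A, w j) + A.card) hne
  rw [hF, mem_filter, mem_powerset] at hAF
  obtain ⟨hAJ, hAsum⟩ := hAF
  by_cases h2 : 2 * ∑ j ∈ J \ A, w j ≤ m + 1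
  · refine ⟨A, J \ A, ∅, ?_, disjoint_sdiff, disjoint_empty_right _, disjoint_empty_right _,
      hAsum, h2, by simp⟩
    rw [union_empty, union_sdiff_self_eq_union, union_eq_right.mpr hAJ]
  · have hBne : (J \ A).Nonempty := by
      by_contra hS
      rw [not_nonempty_iff_eq_empty] at hS
      rw [hS] at h2
      simp at h2
    obtain ⟨j₀, hj₀⟩ := hBne
    have hj₀J : j₀ ∈ J := (mem_sdiff.mp hj₀).1
    have hj₀A : j₀ ∉ A := (mem_sdiff.mp hj₀).2
    -- insert j₀ A is not in F
    have hins : ¬ (2 * ∑ j ∈ insert j₀ A, w j ≤ m + 1) := by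
      intro hcon
      have hmem : insert j₀ A ∈ F := by
        rw [hF, mem_filter, mem_powerset]
        exact ⟨insert_subset hj₀J hAJ, hcon⟩
      have := hAmax _ hmem
      rw [Finset.sum_insert hj₀A, Finset.card_insert_of_notMem hj₀A] at this
      nlinarith [Nat.zero_le (w j₀)]
    rw [Finset.sum_insert hj₀A] at hins
    push_neg at hins
    have hsplit : ∑ j ∈ J \ A, w j + ∑ j ∈ A, w j = ∑ j ∈ J, w j :=
      Finset.sum_sdiff hAJ
    have hsplit2 : ∑ j ∈ (J \ A).erase j₀, w j + w j₀ = ∑ j ∈ J \ A, w j := by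
      rw [add_comm, ← Finset.sum_insert (Finset.notMem_erase j₀ _),
        Finset.insert_erase hj₀]
    have hwj₀ := hw j₀ hj₀J
    refine ⟨A, (J \ A).erase j₀, {j₀}, ?_, ?_, ?_, ?_, hAsum, by omega, by
      rw [Finset.sum_singleton]; omega⟩
    · apply Finset.Subset.antisymm
      · intro x hx
        rcases Finset.mem_union.mp hx with hx | hx
        · rcases Finset.mem_union.mp hx with hx | hx
          · exact hAJ hx
          · exact (Finset.mem_sdiff.mp (Finset.mem_of_mem_erase hx)).1
        · rw [Finset.mem_singleton] at hx; rw [hx]; exact hj₀J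
      · intro x hx
        by_cases hxA : x ∈ A
        · exact Finset.mem_union.mpr (Or.inl (Finset.mem_union.mpr (Or.inl hxA)))
        · by_cases hxj : x = j₀
          · exact Finset.mem_union.mpr (Or.inr (by simp [hxj]))
          · refine Finset.mem_union.mpr (Or.inl (Finset.mem_union.mpr (Or.inr ?_)))
            exact Finset.mem_erase.mpr ⟨hxj, Finset.mem_sdiff.mpr ⟨hx, hxA⟩⟩
    · exact Finset.disjoint_left.mpr fun x hxA hxB =>
        (Finset.mem_sdiff.mp (Finset.mem_of_mem_erase hxB)).2 hxA
    · exact Finset.disjoint_left.mpr fun x hxA hxC => by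
        rw [Finset.mem_singleton] at hxC; exact hj₀A (hxC ▸ hxA)
    · exact Finset.disjoint_left.mpr fun x hxB hxC => by
        rw [Finset.mem_singleton] at hxC
        exact (Finset.notMem_erase j₀ _) (hxC ▸ hxB)

end Aux

section Aux2
open SimpleGraph Finset



/-- Splitting Lemma for Bounded Treewidth Graphs.  If `G` on `n` vertices
has a normalized tree decomposition `({X_i}, r, T)` of width `t`, then there is a node
`l` such that `G \ X_l` is the disjoint union of three (possibly empty) parts with no
edges between them, each of size at most `(n − |X_l| + 1)/2`. -/
theorem normalized_tree_decomposition_split {V I : Type*} [Fintype V] [DecidableEq V]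
    [Fintype I] (G : SimpleGraph V) (T : SimpleGraph I) (X : I → Finset V) (r : I)
    (t : ℕ)
    -- tree decomposition conditions
    (htree : T.Connected ∧ T.IsAcyclic)
    (hcoverV : ∀ v : V, ∃ i, v ∈ X i)
    (hcoverE : ∀ u v : V, G.Adj u v → ∃ i, u ∈ X i ∧ v ∈ X i)
    (hconn : ∀ v : V, (T.induce {i | v ∈ X i}).Connected)
    -- width `t`
    (hwidth : ∀ i, (X i).card ≤ t + 1)
    -- normalization
    (hroot : (X r).card = 1)
    (hnorm : ∀ i i', T.Adj i i' → (symmDiff (X i) (X i')).card = 1) :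
    ∃ l : I, ∃ G₁ G₂ G₃ : Set V,
      Disjoint G₁ G₂ ∧ Disjoint G₁ G₃ ∧ Disjoint G₂ G₃ ∧
      G₁ ∪ G₂ ∪ G₃ = ((X l : Set V))ᶜ ∧
      (∀ a ∈ G₁, ∀ b ∈ G₂, ¬ G.Adj a b) ∧
      (∀ a ∈ G₁, ∀ b ∈ G₃, ¬ G.Adj a b) ∧
      (∀ a ∈ G₂, ∀ b ∈ G₃, ¬ G.Adj a b) ∧
      2 * G₁.ncard ≤ Fintype.card V - (X l).card + 1 ∧
      2 * G₂.ncard ≤ Fintype.card V - (X l).card + 1 ∧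
      2 * G₃.ncard ≤ Fintype.card V - (X l).card + 1 := by
  classical
  obtain ⟨hTc, hac⟩ := htree
  -- canonical paths
  have hex : ∀ a b : I, ∃ p : T.Walk a b, p.IsPath := by
    intro a b
    obtain ⟨w⟩ := hTc.preconnected a b
    exact ⟨w.bypass, w.bypass_isPath⟩
  choose P hP using hex
  have hPU : ∀ (a b : I) (q : T.Walk a b), q.IsPath → q = P a b := by
    intro a b q hq
    have := hac.path_unique ⟨q, hq⟩ ⟨P a b, hP a b⟩
    exact congrArg Subtype.val this
  set n := Fintype.card V with hn
  -- K1 : bags along canonical paths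
  have K1 : ∀ (v : V) (a b : I), v ∈ X a → v ∈ X b → ∀ c ∈ (P a b).support, v ∈ X c := by
    intro v a b ha hb c hc
    obtain ⟨w0⟩ := (hconn v).preconnected ⟨a, ha⟩ ⟨b, hb⟩
    have hmap : c ∈ (w0.map (SimpleGraph.Embedding.induce {i | v ∈ X i}).toHom).support :=
      H1 hPU hc _
    rw [SimpleGraph.Walk.support_map] at hmap
    obtain ⟨c', _, hc'⟩ := List.mem_map.mp hmap
    have : v ∈ X c'.1 := c'.2
    rwa [show (c' : I) = c from hc'] at this
  -- the weight function
  set Bf : I → Finset V :=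
    (fun i => Finset.univ.filter (fun v => v ∉ X i ∧ ∃ k, i ∈ (P r k).support ∧ v ∈ X k))
    with hBf
  have hBfmem : ∀ i v, v ∈ Bf i ↔ (v ∉ X i ∧ ∃ k, i ∈ (P r k).support ∧ v ∈ X k) := by
    intro i v; rw [hBf]; simp
  set S : Finset I :=
    Finset.univ.filter (fun i => n ≤ 2 * (Bf i).card + (X i).card) with hS
  have hrS : r ∈ S := by
    have hBr : Bf r = Finset.univ \ X r := by
      ext v
      rw [hBfmem, Finset.mem_sdiff]
      constructor
      · rintro ⟨hv, -⟩; exact ⟨Finset.mem_univ v, hv⟩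
      · rintro ⟨-, hv⟩
        obtain ⟨k, hk⟩ := hcoverV v
        exact ⟨hv, k, SimpleGraph.Walk.start_mem_support _, hk⟩
    have hn1 : 1 ≤ n := by
      have h1 := Finset.card_le_univ (X r)
      have hcu : (Finset.univ : Finset V).card = n := Finset.card_univ
      omega
    rw [hS, Finset.mem_filter]
    refine ⟨Finset.mem_univ r, ?_⟩
    rw [hBr, Finset.card_sdiff_of_subset (Finset.subset_univ _), hroot]
    have hcu : (Finset.univ : Finset V).card = n := Finset.card_univ
    omega
  obtain ⟨l, hlS, hlmin⟩ := S.exists_min_image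
    (fun i => (n + 2) * (Bf i).card + (X i).card) ⟨r, hrS⟩
  have hlS' : n ≤ 2 * (Bf l).card + (X l).card := by
    rw [hS, Finset.mem_filter] at hlS; exact hlS.2
  -- the side sets
  set U : I → Finset V :=
    (fun j => Finset.univ.filter
      (fun v => v ∉ X l ∧ ∃ k, v ∈ X k ∧ ∃ w : T.Walk j k, l ∉ w.support)) with hU
  have hUmem : ∀ j v, v ∈ U j ↔
      (v ∉ X l ∧ ∃ k, v ∈ X k ∧ ∃ w : T.Walk j k, l ∉ w.support) := by
    intro j v; rw [hU]; simp
  -- F2 : distinct neighbours have disjoint sides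
  have F2 : ∀ j j', T.Adj l j → T.Adj l j' → ∀ v, v ∈ U j → v ∈ U j' → j = j' := by
    intro j j' hadj hadj' v hv hv'
    by_contra hne
    obtain ⟨hvXl, k, hvk, w, hw⟩ := (hUmem j v).mp hv
    obtain ⟨-, k', hvk', w', hw'⟩ := (hUmem j' v).mp hv'
    have hPkk' : l ∉ (P k k').support := fun hl => hvXl (K1 v k k' hvk hvk' l hl)
    -- a walk from j to j' avoiding l
    set W : T.Walk j j' := w.append ((P k k').append w'.reverse) with hW
    have hWl : l ∉ W.support := by
      rw [hW, SimpleGraph.Walk.mem_support_append_iff,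
        SimpleGraph.Walk.mem_support_append_iff, SimpleGraph.Walk.support_reverse]
      push_neg
      exact ⟨hw, hPkk', by simpa using hw'⟩
    have hQl : l ∉ W.bypass.support := fun h => hWl (W.support_bypass_subset h)
    -- the two-edge path through l
    have h2path : (SimpleGraph.Walk.cons hadj.symm
        (SimpleGraph.Walk.cons hadj' SimpleGraph.Walk.nil)).IsPath := by
      rw [SimpleGraph.Walk.cons_isPath_iff]
      refine ⟨?_, ?_⟩
      · rw [SimpleGraph.Walk.cons_isPath_iff]
        exact ⟨SimpleGraph.Walk.IsPath.nil, by simpa using hadj'.ne⟩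
      · simp only [SimpleGraph.Walk.support_cons, SimpleGraph.Walk.support_nil,
          List.mem_cons, List.mem_singleton]
        push_neg
        exact ⟨hadj.ne', hne, by simp⟩
    have he1 : W.bypass = P j j' := hPU _ _ _ W.bypass_isPath
    have he2 : SimpleGraph.Walk.cons hadj.symm
        (SimpleGraph.Walk.cons hadj' SimpleGraph.Walk.nil) = P j j' := hPU _ _ _ h2path
    apply hQl
    rw [he1, ← he2]
    simp
  -- F1 : sides cover the complement of the bag
  have F1 : ∀ v, v ∉ X l → ∃ j, T.Adj l j ∧ v ∈ U j := by
    intro v hv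
    obtain ⟨k, hk⟩ := hcoverV v
    have hkl : k ≠ l := fun h => hv (h ▸ hk)
    have hnotnil : ¬ (P l k).Nil := SimpleGraph.Walk.not_nil_of_ne (Ne.symm hkl)
    obtain ⟨j, hadj, q, hq⟩ := SimpleGraph.Walk.not_nil_iff.mp hnotnil
    have hlq : l ∉ q.support := by
      have hnd := (hP l k).support_nodup
      rw [hq, SimpleGraph.Walk.support_cons] at hnd
      exact (List.nodup_cons.mp hnd).1
    exact ⟨j, hadj, (hUmem j v).mpr ⟨hv, k, hk, q, hlq⟩⟩
  -- F3 : no edges between different sides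
  have F3 : ∀ j j', T.Adj l j → T.Adj l j' → ∀ u v',
      u ∈ U j → v' ∈ U j' → G.Adj u v' → j = j' := by
    intro j j' hadj hadj' u v' hu hv' hG
    obtain ⟨m, hum, hvm⟩ := hcoverE u v' hG
    obtain ⟨huXl, k, huk, w, hw⟩ := (hUmem j u).mp hu
    obtain ⟨hvXl', -⟩ := (hUmem j' v').mp hv'
    have hPkm : l ∉ (P k m).support := fun hl => huXl (K1 u k m huk hum l hl)
    have hwm : l ∉ (w.append (P k m)).support := by
      rw [SimpleGraph.Walk.mem_support_append_iff]
      push_neg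
      exact ⟨hw, hPkm⟩
    have hv'Uj : v' ∈ U j := (hUmem j v').mpr ⟨hvXl', m, hvm, w.append (P k m), hwm⟩
    exact F2 j j' hadj hadj' v' hv'Uj hv'
  -- F4 : each side is small
  have F4 : ∀ j, T.Adj l j → 2 * (U j).card + (X l).card ≤ n := by
    intro j hadj
    by_cases hc : l ∈ (P r j).support
    · -- "child" case
      have hUsub : U j ⊆ Bf j ∪ (X j \ X l) := by
        intro v hv
        obtain ⟨hvXl, k, hvk, w, hw⟩ := (hUmem j v).mp hv
        by_cases hvj : v ∈ X j
        · exact Finset.mem_union.mpr (Or.inr (Finset.mem_sdiff.mpr ⟨hvj, hvXl⟩))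
        · refine Finset.mem_union.mpr (Or.inl ((hBfmem j v).mpr ⟨hvj, k, ?_, hvk⟩))
          exact (H5 hP hPU hadj hc w hw).2.2
      have hcard : (U j).card ≤ (Bf j).card + (X j \ X l).card :=
        le_trans (Finset.card_le_card hUsub) (Finset.card_union_le _ _)
      have hXjn : (X j).card ≤ n := by
        have := Finset.card_le_univ (X j)
        have hcu : (Finset.univ : Finset V).card = n := Finset.card_univ
        omega
      rcases symm_cases (X l) (X j) (hnorm l j hadj) with
        ⟨hsub, hsd1, hcards⟩ | ⟨hsub, hsd1, hcards⟩
      · -- grow : X l ⊆ X j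
        obtain ⟨v0, hv0⟩ := Finset.card_eq_one.mp hsd1
        have hv0mem : v0 ∈ X j \ X l := hv0 ▸ Finset.mem_singleton_self v0
        have hv0j : v0 ∈ X j := (Finset.mem_sdiff.mp hv0mem).1
        have hv0l : v0 ∉ X l := (Finset.mem_sdiff.mp hv0mem).2
        have hBsub : Bf j ⊆ (Bf l).erase v0 := by
          intro v hv
          obtain ⟨hvj, k, hjk, hvk⟩ := (hBfmem j v).mp hv
          refine Finset.mem_erase.mpr ⟨fun h => hvj (h ▸ hv0j), ?_⟩
          refine (hBfmem l v).mpr ⟨fun h => hvj (hsub h), k, ?_, hvk⟩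
          exact (H6 hP hPU hc hjk hadj.ne).1
        have hv0Bl : v0 ∈ Bf l := (hBfmem l v0).mpr ⟨hv0l, j, hc, hv0j⟩
        have hbj : (Bf j).card + 1 ≤ (Bf l).card := by
          have h1 := Finset.card_le_card hBsub
          have h2 := Finset.card_erase_of_mem hv0Bl
          have h3 := Finset.card_pos.mpr ⟨v0, hv0Bl⟩
          omega
        have hkey : (n + 2) * (Bf j).card + (X j).card <
            (n + 2) * (Bf l).card + (X l).card :=
          keylt1 n _ _ _ _ (by omega) (by omega)
        have hjS : j ∉ S := by
          intro hj
          exact absurd (hlmin j hj) (by simp only [not_le]; exact hkey)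
        have hjS' : 2 * (Bf j).card + (X j).card < n := by
          rw [hS, Finset.mem_filter] at hjS
          push_neg at hjS
          exact hjS (Finset.mem_univ j)
        omega
      · -- shrink : X j ⊆ X l
        have hsd0 : (X j \ X l).card = 0 := by
          rw [Finset.card_eq_zero, Finset.sdiff_eq_empty_iff_subset]
          exact hsub
        have hBsub : Bf j ⊆ Bf l := by
          intro v hv
          obtain ⟨hvj, k, hjk, hvk⟩ := (hBfmem j v).mp hv
          obtain ⟨hlk, hjlk⟩ := H6 hP hPU hc hjk hadj.ne
          refine (hBfmem l v).mpr ⟨?_, k, hlk, hvk⟩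
          intro hvl
          exact hvj (K1 v l k hvl hvk j hjlk)
        have hkey : (n + 2) * (Bf j).card + (X j).card <
            (n + 2) * (Bf l).card + (X l).card :=
          keylt2 n _ _ _ _ (Finset.card_le_card hBsub) (by omega)
        have hjS : j ∉ S := by
          intro hj
          exact absurd (hlmin j hj) (by simp only [not_le]; exact hkey)
        have hjS' : 2 * (Bf j).card + (X j).card < n := by
          rw [hS, Finset.mem_filter] at hjS
          push_neg at hjS
          exact hjS (Finset.mem_univ j)
        omega
    · -- "parent" case
      have hjP : j ∈ (P r l).support := H4 hP hPU hadj hc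
      have hdisjB : ∀ v ∈ U j, v ∉ Bf l := by
        intro v hvU hvB
        obtain ⟨hvXl, k, hvk, w, hw⟩ := (hUmem j v).mp hvU
        obtain ⟨-, k', hlk', hvk'⟩ := (hBfmem l v).mp hvB
        have hPkk' : l ∉ (P k k').support := fun hl => hvXl (K1 v k k' hvk hvk' l hl)
        have hjl : j ≠ l := hadj.ne'
        set W : T.Walk r k' := ((P r l).takeUntil j hjP).append (w.append (P k k'))
          with hW
        have hWl : l ∉ W.support := by
          rw [hW, SimpleGraph.Walk.mem_support_append_iff,
            SimpleGraph.Walk.mem_support_append_iff]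
          push_neg
          exact ⟨H7 hP hjP hjl, hw, hPkk'⟩
        exact hWl (H1 hPU hlk' W)
      have hdisjX : ∀ v ∈ U j, v ∉ X l := fun v hv => ((hUmem j v).mp hv).1
      have hdisjBX : ∀ v ∈ Bf l, v ∉ X l := fun v hv => ((hBfmem l v).mp hv).1
      have hsum3 : (U j).card + (Bf l).card + (X l).card ≤ n := by
        have hd1 : Disjoint (U j) (Bf l) := Finset.disjoint_left.mpr hdisjB
        have hd2 : Disjoint (U j ∪ Bf l) (X l) := by
          rw [Finset.disjoint_union_left]
          exact ⟨Finset.disjoint_left.mpr hdisjX, Finset.disjoint_left.mpr hdisjBX⟩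
        have h1 : (U j ∪ Bf l ∪ X l).card ≤ n := by
          have := Finset.card_le_univ (U j ∪ Bf l ∪ X l)
          have hcu : (Finset.univ : Finset V).card = n := Finset.card_univ
          omega
        rw [Finset.card_union_of_disjoint hd2, Finset.card_union_of_disjoint hd1] at h1
        exact h1
      omega
  -- assemble
  set J : Finset I := Finset.univ.filter (fun j => T.Adj l j) with hJ
  have hJmem : ∀ j, j ∈ J ↔ T.Adj l j := by intro j; rw [hJ]; simp
  have hdisjU : ∀ j ∈ J, ∀ j' ∈ J, j ≠ j' → Disjoint (U j) (U j') := by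
    intro j hj j' hj' hne
    refine Finset.disjoint_left.mpr fun v hv hv' => ?_
    exact hne (F2 j j' ((hJmem j).mp hj) ((hJmem j').mp hj') v hv hv')
  have hcover : J.biUnion U = Finset.univ \ X l := by
    ext v
    rw [Finset.mem_biUnion, Finset.mem_sdiff]
    constructor
    · rintro ⟨j, -, hv⟩
      exact ⟨Finset.mem_univ v, ((hUmem j v).mp hv).1⟩
    · rintro ⟨-, hv⟩
      obtain ⟨j, hadj, hvU⟩ := F1 v hv
      exact ⟨j, (hJmem j).mpr hadj, hvU⟩
  have hcu : (Finset.univ : Finset V).card = n := Finset.card_univ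
  have hXln : (X l).card ≤ n := by
    have := Finset.card_le_univ (X l); omega
  set m : ℕ := n - (X l).card with hm
  have hsumJ : ∑ j ∈ J, (U j).card = m := by
    rw [← Finset.card_biUnion hdisjU, hcover, Finset.card_sdiff_of_subset (Finset.subset_univ _),
      hcu, hm]
  have hwJ : ∀ j ∈ J, 2 * (U j).card ≤ m := by
    intro j hj
    have := F4 j ((hJmem j).mp hj)
    omega
  obtain ⟨A, B, C, hABC, hAB, hAC, hBC, hsA, hsB, hsC⟩ :=
    pack3 J (fun j => (U j).card) m hwJ (le_of_eq hsumJ)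
  have hAJ : A ⊆ J := hABC ▸ (Finset.subset_union_left.trans Finset.subset_union_left)
  have hBJ : B ⊆ J := hABC ▸ (Finset.subset_union_right.trans Finset.subset_union_left)
  have hCJ : C ⊆ J := hABC ▸ Finset.subset_union_right
  have hdisjFin : ∀ (A' B' : Finset I), A' ⊆ J → B' ⊆ J → Disjoint A' B' →
      Disjoint (↑(A'.biUnion U) : Set V) ↑(B'.biUnion U) := by
    intro A' B' hA hB hd
    rw [Finset.disjoint_coe]
    refine Finset.disjoint_left.mpr fun v hv hv' => ?_
    obtain ⟨j, hj, hvU⟩ := Finset.mem_biUnion.mp hv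
    obtain ⟨j', hj', hvU'⟩ := Finset.mem_biUnion.mp hv'
    have hjj := F2 j j' ((hJmem j).mp (hA hj)) ((hJmem j').mp (hB hj')) v hvU hvU'
    exact Finset.disjoint_left.mp hd hj (hjj ▸ hj')
  have hedge : ∀ (A' B' : Finset I), A' ⊆ J → B' ⊆ J → Disjoint A' B' →
      ∀ a ∈ (↑(A'.biUnion U) : Set V), ∀ b ∈ (↑(B'.biUnion U) : Set V), ¬ G.Adj a b := by
    intro A' B' hA hB hd a ha b hb hGab
    obtain ⟨j, hj, haU⟩ := Finset.mem_biUnion.mp ha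
    obtain ⟨j', hj', hbU⟩ := Finset.mem_biUnion.mp hb
    have hjj := F3 j j' ((hJmem j).mp (hA hj)) ((hJmem j').mp (hB hj')) a b haU hbU hGab
    exact Finset.disjoint_left.mp hd hj (hjj ▸ hj')
  have hsize : ∀ (A' : Finset I), A' ⊆ J → 2 * (∑ j ∈ A', (U j).card) ≤ m + 1 →
      2 * (↑(A'.biUnion U) : Set V).ncard ≤ n - (X l).card + 1 := by
    intro A' hA hbound
    rw [Set.ncard_coe_finset, Finset.card_biUnion
      (fun x hx y hy hxy => hdisjU x (hA hx) y (hA hy) hxy)]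
    rw [hm] at hbound
    exact hbound
  have hfin : A.biUnion U ∪ B.biUnion U ∪ C.biUnion U = Finset.univ \ X l := by
    rw [← hcover, ← hABC]
    ext v
    simp only [Finset.mem_union, Finset.mem_biUnion]
    constructor
    · rintro ((⟨j, hj, hv⟩ | ⟨j, hj, hv⟩) | ⟨j, hj, hv⟩)
      exacts [⟨j, Or.inl (Or.inl hj), hv⟩, ⟨j, Or.inl (Or.inr hj), hv⟩,
        ⟨j, Or.inr hj, hv⟩]
    · rintro ⟨j, (hj | hj) | hj, hv⟩
      exacts [Or.inl (Or.inl ⟨j, hj, hv⟩), Or.inl (Or.inr ⟨j, hj, hv⟩),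
        Or.inr ⟨j, hj, hv⟩]
  refine ⟨l, ↑(A.biUnion U), ↑(B.biUnion U), ↑(C.biUnion U),
    hdisjFin A B hAJ hBJ hAB, hdisjFin A C hAJ hCJ hAC, hdisjFin B C hBJ hCJ hBC, ?_,
    hedge A B hAJ hBJ hAB, hedge A C hAJ hCJ hAC, hedge B C hBJ hCJ hBC,
    hsize A hAJ hsA, hsize B hBJ hsB, hsize C hCJ hsC⟩
  rw [← Finset.coe_union, ← Finset.coe_union, hfin, Finset.coe_sdiff, Finset.coe_univ]
  exact (Set.compl_eq_univ_diff _).symm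

end Aux2
end

section
/- Every graph G on at most t+3 vertices has product dimension at most t+2; in particular, any graph on m ≥ 3 vertices has product dimension at most m − 1. -/
set_option linter.unusedSectionVars false

open scoped Classical

/-- The product dimension of a graph. -/
noncomputable def pdim {V : Type*} (G : SimpleGraph V) : ℕ :=
  sInf {l | ∃ φ : V → Fin l → ℕ, IsEncoding G l φ}

section Core

variable {V : Type*} (G : SimpleGraph V) (v w : V) {m : ℕ} [NeZero m]
  (E : {x : V // x ≠ v ∧ x ≠ w} ≃ ZMod m)

/-- the vertex with label `k` -/
noncomputable def cIota (k : ZMod m) : V := (E.symm k : V)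

lemma cIota_ne_v (k : ZMod m) : cIota v w E k ≠ v := (E.symm k).2.1

lemma cIota_ne_w (k : ZMod m) : cIota v w E k ≠ w := (E.symm k).2.2

lemma cIota_label {x : V} (hx : x ≠ v ∧ x ≠ w) {k : ZMod m} (h : E ⟨x, hx⟩ = k) :
    cIota v w E k = x := by
  rw [cIota, ← h, Equiv.symm_apply_apply]

lemma label_cIota (k : ZMod m) (h : cIota v w E k ≠ v ∧ cIota v w E k ≠ w) :
    E ⟨cIota v w E k, h⟩ = k := by
  have : (⟨cIota v w E k, h⟩ : {x : V // x ≠ v ∧ x ≠ w}) = E.symm k := by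
    apply Subtype.ext; rfl
  rw [this, Equiv.apply_symm_apply]

/-- The round-robin value function: coordinate `k` of vertex `x`. -/
noncomputable def cPsi (x : V) (k : ZMod m) : ℕ :=
  if hx : x = v then (if G.Adj v (cIota v w E k) then m else k.val)
  else if hx' : x = w then (if G.Adj w (cIota v w E k) then m + 1 else k.val)
  else
    (if G.Adj x (cIota v w E (2 * k - E ⟨x, hx, hx'⟩)) then (E ⟨x, hx, hx'⟩).val
     else min (E ⟨x, hx, hx'⟩).val (2 * k - E ⟨x, hx, hx'⟩).val)

lemma cPsi_v (k : ZMod m) :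
    cPsi G v w E v k = if G.Adj v (cIota v w E k) then m else k.val := by
  rw [cPsi, dif_pos rfl]

lemma cPsi_w (hwv : w ≠ v) (k : ZMod m) :
    cPsi G v w E w k = if G.Adj w (cIota v w E k) then m + 1 else k.val := by
  rw [cPsi, dif_neg hwv, dif_pos rfl]

lemma cPsi_W {x : V} (hx : x ≠ v ∧ x ≠ w) (k : ZMod m) :
    cPsi G v w E x k =
      if G.Adj x (cIota v w E (2 * k - E ⟨x, hx⟩)) then (E ⟨x, hx⟩).val
      else min (E ⟨x, hx⟩).val (2 * k - E ⟨x, hx⟩).val := by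
  rw [cPsi, dif_neg hx.1, dif_neg hx.2]

lemma M1 {x y : V} (hx : x ≠ v ∧ x ≠ w) (hy : y ≠ v ∧ y ≠ w) (hxy : x ≠ y) {k : ZMod m}
    (heq : cPsi G v w E x k = cPsi G v w E y k) :
    E ⟨x, hx⟩ + E ⟨y, hy⟩ = 2 * k ∧ ¬ G.Adj x y := by
  rw [cPsi_W G v w E hx, cPsi_W G v w E hy] at heq
  set a := E ⟨x, hx⟩ with ha
  set b := E ⟨y, hy⟩ with hb
  have hιa : cIota v w E a = x := cIota_label v w E hx rfl
  have hιb : cIota v w E b = y := cIota_label v w E hy rfl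
  have hab : a ≠ b := fun hEq => hxy (congrArg Subtype.val (E.injective hEq))
  have hval : Function.Injective (ZMod.val : ZMod m → ℕ) := ZMod.val_injective m
  by_cases h1 : G.Adj x (cIota v w E (2 * k - a)) <;>
    by_cases h2 : G.Adj y (cIota v w E (2 * k - b))
  · rw [if_pos h1, if_pos h2] at heq
    exact absurd (hval heq) hab
  · rw [if_pos h1, if_neg h2] at heq
    rcases min_cases b.val (2 * k - b).val with ⟨hmin, -⟩ | ⟨hmin, -⟩ <;> rw [hmin] at heq
    · exact absurd (hval heq) hab
    · have haeq : a = 2 * k - b := hval heq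
      have hba : 2 * k - a = b := by linear_combination -haeq
      rw [hba, hιb] at h1
      rw [← haeq, hιa] at h2
      exact absurd h1.symm h2
  · rw [if_neg h1, if_pos h2] at heq
    rcases min_cases a.val (2 * k - a).val with ⟨hmin, -⟩ | ⟨hmin, -⟩ <;> rw [hmin] at heq
    · exact absurd (hval heq) hab
    · have hbeq : 2 * k - a = b := hval heq
      rw [hbeq, hιb] at h1
      have hab2 : 2 * k - b = a := by linear_combination hbeq
      rw [hab2, hιa] at h2
      exact absurd h2.symm h1
  · rw [if_neg h1, if_neg h2] at heq
    rcases min_cases a.val (2 * k - a).val with ⟨hmin, -⟩ | ⟨hmin, -⟩ <;>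
      rcases min_cases b.val (2 * k - b).val with ⟨hmin2, -⟩ | ⟨hmin2, -⟩ <;>
      rw [hmin, hmin2] at heq
    · exact absurd (hval heq) hab
    · have haeq : a = 2 * k - b := hval heq
      have hxι : cIota v w E (2 * k - b) = x := by rw [← haeq, hιa]
      rw [hxι] at h2
      exact ⟨by linear_combination haeq, fun hAdj => h2 hAdj.symm⟩
    · have hbeq : 2 * k - a = b := hval heq
      rw [hbeq, hιb] at h1
      exact ⟨by linear_combination -hbeq, h1⟩
    · have : (2 : ZMod m) * k - a = 2 * k - b := hval heq
      exact absurd (by linear_combination -this) hab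
  done

lemma M2 {u : V} (hu : u ≠ v ∧ u ≠ w) {k : ZMod m}
    (heq : cPsi G v w E v k = cPsi G v w E u k) :
    E ⟨u, hu⟩ = k ∧ ¬ G.Adj v u := by
  rw [cPsi_v, cPsi_W G v w E hu] at heq
  set b := E ⟨u, hu⟩ with hb
  have hιb : cIota v w E b = u := cIota_label v w E hu rfl
  have hbm : b.val < m := ZMod.val_lt b
  have hkm : k.val < m := ZMod.val_lt k
  have hval : Function.Injective (ZMod.val : ZMod m → ℕ) := ZMod.val_injective m
  by_cases h1 : G.Adj v (cIota v w E k)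
  · rw [if_pos h1] at heq
    by_cases h2 : G.Adj u (cIota v w E (2 * k - b))
    · rw [if_pos h2] at heq; omega
    · rw [if_neg h2] at heq
      have := min_le_left b.val (2 * k - b).val; omega
  · rw [if_neg h1] at heq
    have hgoal : b = k → b = k ∧ ¬ G.Adj v u := by
      intro hbk
      refine ⟨hbk, ?_⟩
      rw [← hbk, hιb] at h1; exact h1
    by_cases h2 : G.Adj u (cIota v w E (2 * k - b))
    · rw [if_pos h2] at heq
      exact hgoal (hval heq.symm)
    · rw [if_neg h2] at heq
      rcases min_cases b.val (2 * k - b).val with ⟨hmin, -⟩ | ⟨hmin, -⟩ <;> rw [hmin] at heq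
      · exact hgoal (hval heq.symm)
      · have : k = 2 * k - b := hval heq
        exact hgoal (by linear_combination this)

lemma M3 (hwv : w ≠ v) {u : V} (hu : u ≠ v ∧ u ≠ w) {k : ZMod m}
    (heq : cPsi G v w E w k = cPsi G v w E u k) :
    E ⟨u, hu⟩ = k ∧ ¬ G.Adj w u := by
  rw [cPsi_w G v w E hwv, cPsi_W G v w E hu] at heq
  set b := E ⟨u, hu⟩ with hb
  have hιb : cIota v w E b = u := cIota_label v w E hu rfl
  have hbm : b.val < m := ZMod.val_lt b
  have hkm : k.val < m := ZMod.val_lt k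
  have hval : Function.Injective (ZMod.val : ZMod m → ℕ) := ZMod.val_injective m
  by_cases h1 : G.Adj w (cIota v w E k)
  · rw [if_pos h1] at heq
    by_cases h2 : G.Adj u (cIota v w E (2 * k - b))
    · rw [if_pos h2] at heq; omega
    · rw [if_neg h2] at heq
      have := min_le_left b.val (2 * k - b).val; omega
  · rw [if_neg h1] at heq
    have hgoal : b = k → b = k ∧ ¬ G.Adj w u := by
      intro hbk
      refine ⟨hbk, ?_⟩
      rw [← hbk, hιb] at h1; exact h1
    by_cases h2 : G.Adj u (cIota v w E (2 * k - b))
    · rw [if_pos h2] at heq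
      exact hgoal (hval heq.symm)
    · rw [if_neg h2] at heq
      rcases min_cases b.val (2 * k - b).val with ⟨hmin, -⟩ | ⟨hmin, -⟩ <;> rw [hmin] at heq
      · exact hgoal (hval heq.symm)
      · have : k = 2 * k - b := hval heq
        exact hgoal (by linear_combination this)

lemma M4 (hwv : w ≠ v) {k : ZMod m}
    (heq : cPsi G v w E v k = cPsi G v w E w k) :
    ¬ G.Adj v (cIota v w E k) ∧ ¬ G.Adj w (cIota v w E k) := by
  rw [cPsi_v, cPsi_w G v w E hwv] at heq
  have hkm : k.val < m := ZMod.val_lt k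
  by_cases h1 : G.Adj v (cIota v w E k) <;> by_cases h2 : G.Adj w (cIota v w E k)
  · rw [if_pos h1, if_pos h2] at heq; omega
  · rw [if_pos h1, if_neg h2] at heq; omega
  · rw [if_neg h1, if_pos h2] at heq; omega
  · exact ⟨h1, h2⟩

lemma cover_W (hhalf : (2 : ZMod m) * (((m + 1) / 2 : ℕ) : ZMod m) = 1)
    {x y : V} (hx : x ≠ v ∧ x ≠ w) (hy : y ≠ v ∧ y ≠ w) (hxy : x ≠ y)
    (hnadj : ¬ G.Adj x y) :
    ∃ k : ZMod m, cPsi G v w E x k = cPsi G v w E y k := by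
  set a := E ⟨x, hx⟩ with ha
  set b := E ⟨y, hy⟩ with hb
  refine ⟨(((m + 1) / 2 : ℕ) : ZMod m) * (a + b), ?_⟩
  set k := (((m + 1) / 2 : ℕ) : ZMod m) * (a + b) with hk
  have h2k : 2 * k = a + b := by rw [hk, ← mul_assoc, hhalf, one_mul]
  have hpa : 2 * k - a = b := by linear_combination h2k
  have hpb : 2 * k - b = a := by linear_combination h2k
  rw [cPsi_W G v w E hx, cPsi_W G v w E hy, ← ha, ← hb, hpa, hpb,
    cIota_label v w E hy rfl, cIota_label v w E hx rfl, if_neg hnadj,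
    if_neg (fun h => hnadj h.symm), Nat.min_comm]

lemma cover_v {u : V} (hu : u ≠ v ∧ u ≠ w) (hnadj : ¬ G.Adj v u) :
    cPsi G v w E v (E ⟨u, hu⟩) = cPsi G v w E u (E ⟨u, hu⟩) := by
  rw [cPsi_v, cPsi_W G v w E hu]
  have h2b : 2 * E ⟨u, hu⟩ - E ⟨u, hu⟩ = E ⟨u, hu⟩ := by ring
  rw [h2b, cIota_label v w E hu rfl, if_neg hnadj, if_neg (G.irrefl), min_self]

lemma cover_w (hwv : w ≠ v) {u : V} (hu : u ≠ v ∧ u ≠ w) (hnadj : ¬ G.Adj w u) :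
    cPsi G v w E w (E ⟨u, hu⟩) = cPsi G v w E u (E ⟨u, hu⟩) := by
  rw [cPsi_w G v w E hwv, cPsi_W G v w E hu]
  have h2b : 2 * E ⟨u, hu⟩ - E ⟨u, hu⟩ = E ⟨u, hu⟩ := by ring
  rw [h2b, cIota_label v w E hu rfl, if_neg hnadj, if_neg (G.irrefl), min_self]

lemma cover_vw (hwv : w ≠ v) {u : V} (hu : u ≠ v ∧ u ≠ w)
    (h1 : ¬ G.Adj v u) (h2 : ¬ G.Adj w u) :
    cPsi G v w E v (E ⟨u, hu⟩) = cPsi G v w E w (E ⟨u, hu⟩) := by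
  rw [cPsi_v, cPsi_w G v w E hwv, cIota_label v w E hu rfl, if_neg h1, if_neg h2]


lemma sound (hvw : ¬ G.Adj v w) {x y : V} (hxy : x ≠ y) {k : ZMod m}
    (heq : cPsi G v w E x k = cPsi G v w E y k) : ¬ G.Adj x y := by
  by_cases hx1 : x = v
  · rw [hx1] at heq hxy ⊢
    by_cases hy1 : y = v
    · exact absurd hy1.symm hxy
    by_cases hy2 : y = w
    · rw [hy2]; exact hvw
    · exact (M2 G v w E ⟨hy1, hy2⟩ heq).2
  · by_cases hx2 : x = w
    · rw [hx2] at hx1 heq hxy ⊢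
      have hwv : w ≠ v := hx1
      by_cases hy1 : y = v
      · rw [hy1]; exact fun h => hvw h.symm
      by_cases hy2 : y = w
      · exact absurd hy2.symm hxy
      · exact (M3 G v w E hwv ⟨hy1, hy2⟩ heq).2
    · have hx : x ≠ v ∧ x ≠ w := ⟨hx1, hx2⟩
      by_cases hy1 : y = v
      · rw [hy1] at heq ⊢
        exact fun h => (M2 G v w E hx heq.symm).2 h.symm
      by_cases hy2 : y = w
      · rw [hy2] at hy1 heq ⊢
        have hwv : w ≠ v := hy1
        exact fun h => (M3 G v w E hwv hx heq.symm).2 h.symm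
      · exact (M1 G v w E hx ⟨hy1, hy2⟩ hxy heq).2

lemma uniq (hhalf : (2 : ZMod m) * (((m + 1) / 2 : ℕ) : ZMod m) = 1)
    {x y : V} (hxy : x ≠ y) (hW1 : ¬(x = v ∧ y = w)) (hW2 : ¬(x = w ∧ y = v))
    {k k' : ZMod m} (h : cPsi G v w E x k = cPsi G v w E y k)
    (h' : cPsi G v w E x k' = cPsi G v w E y k') : k = k' := by
  have cancel : ∀ k1 k2 : ZMod m, 2 * k1 = 2 * k2 → k1 = k2 := by
    intro k1 k2 hh
    have h1 : (((m + 1) / 2 : ℕ) : ZMod m) * (2 * k1)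
        = (((m + 1) / 2 : ℕ) : ZMod m) * (2 * k2) := by rw [hh]
    rwa [← mul_assoc, ← mul_assoc, mul_comm _ (2 : ZMod m), hhalf, one_mul, one_mul] at h1
  by_cases hx1 : x = v
  · rw [hx1] at h h' hxy hW1
    by_cases hy1 : y = v
    · exact absurd hy1.symm hxy
    by_cases hy2 : y = w
    · exact absurd ⟨rfl, hy2⟩ hW1
    · have e1 := (M2 G v w E ⟨hy1, hy2⟩ h).1
      have e2 := (M2 G v w E ⟨hy1, hy2⟩ h').1
      rw [← e1, ← e2]
  · by_cases hx2 : x = w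
    · rw [hx2] at h h' hxy hx1 hW2
      have hwv : w ≠ v := hx1
      by_cases hy1 : y = v
      · exact absurd ⟨rfl, hy1⟩ hW2
      by_cases hy2 : y = w
      · exact absurd hy2.symm hxy
      · have e1 := (M3 G v w E hwv ⟨hy1, hy2⟩ h).1
        have e2 := (M3 G v w E hwv ⟨hy1, hy2⟩ h').1
        rw [← e1, ← e2]
    · have hx : x ≠ v ∧ x ≠ w := ⟨hx1, hx2⟩
      by_cases hy1 : y = v
      · rw [hy1] at h h'
        have e1 := (M2 G v w E hx h.symm).1
        have e2 := (M2 G v w E hx h'.symm).1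
        rw [← e1, ← e2]
      by_cases hy2 : y = w
      · rw [hy2] at h h' hy1
        have hwv : w ≠ v := hy1
        have e1 := (M3 G v w E hwv hx h.symm).1
        have e2 := (M3 G v w E hwv hx h'.symm).1
        rw [← e1, ← e2]
      · have e1 := (M1 G v w E hx ⟨hy1, hy2⟩ hxy h).1
        have e2 := (M1 G v w E hx ⟨hy1, hy2⟩ hxy h').1
        exact cancel _ _ (e1.symm.trans e2)

end Core

lemma half_spec {m : ℕ} [NeZero m] (hm : Odd m) :
    (2 : ZMod m) * (((m + 1) / 2 : ℕ) : ZMod m) = 1 := by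
  have h2 : 2 * ((m + 1) / 2) = m + 1 := by
    obtain ⟨j, hj⟩ := hm; omega
  calc (2 : ZMod m) * (((m + 1) / 2 : ℕ) : ZMod m)
      = ((2 * ((m + 1) / 2) : ℕ) : ZMod m) := by push_cast; ring
    _ = ((m + 1 : ℕ) : ZMod m) := by rw [h2]
    _ = 1 := by push_cast [ZMod.natCast_self]; ring

lemma card_W1 {V : Type*} [Fintype V] (v : V) :
    Fintype.card {x : V // x ≠ v ∧ x ≠ v} = Fintype.card V - 1 := by
  classical
  rw [Fintype.card_congr (Equiv.subtypeEquivRight (q := fun x : V => ¬ (x = v))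
    (fun x => by simp))]
  rw [Fintype.card_subtype_compl, Fintype.card_subtype_eq]

lemma card_W2 {V : Type*} [Fintype V] {v w : V} (hvw : v ≠ w) :
    Fintype.card {x : V // x ≠ v ∧ x ≠ w} = Fintype.card V - 2 := by
  classical
  rw [Fintype.card_congr (Equiv.subtypeEquivRight (q := fun x : V => ¬ (x = v ∨ x = w))
    (fun x => by tauto))]
  rw [Fintype.card_subtype_compl]
  congr 1
  rw [Fintype.card_congr (Equiv.subtypeEquivRight (q := fun x : V => x ∈ ({v, w} : Finset V))
    (fun x => by simp))]
  rw [Fintype.card_coe, Finset.card_pair hvw]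

lemma encB_even {V : Type*} [Fintype V] (G : SimpleGraph V) (h3 : 3 ≤ Fintype.card V)
    (he : Even (Fintype.card V)) :
    ∃ φ : V → Fin (Fintype.card V - 1) → ℕ, IsEncoding G (Fintype.card V - 1) φ := by
  classical
  obtain ⟨v⟩ : Nonempty V := Fintype.card_pos_iff.mp (by omega)
  set n := Fintype.card V with hn
  set m := n - 1 with hm
  have hmodd : Odd m := by
    rcases he with ⟨j, hj⟩; exact ⟨j - 1, by omega⟩
  haveI : NeZero m := ⟨by omega⟩
  have E : {x : V // x ≠ v ∧ x ≠ v} ≃ ZMod m :=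
    Fintype.equivOfCardEq (by rw [card_W1 v, ZMod.card])
  have hhalf := half_spec hmodd
  have hvv : ¬ G.Adj v v := G.irrefl
  have hfin : ∀ k : ZMod m, k.val < n - 1 := fun k => by rw [← hm]; exact ZMod.val_lt k
  refine ⟨fun x i => cPsi G v v E x ((i : ℕ) : ZMod m), ?_, ?_⟩
  · intro x y hxyEq
    by_contra hxy
    have hall : ∀ k : ZMod m, cPsi G v v E x k = cPsi G v v E y k := fun k => by
      have h0 := congrFun hxyEq (⟨k.val, hfin k⟩ : Fin (n - 1))
      simpa [ZMod.natCast_zmod_val] using h0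
    haveI : Fact (1 < m) := ⟨by omega⟩
    exact absurd (uniq G v v E hhalf hxy (fun h => hxy (h.1.trans h.2.symm))
      (fun h => hxy (h.1.trans h.2.symm)) (hall 0) (hall 1)) zero_ne_one
  · intro x y hxy
    constructor
    · intro hadj i heqi
      exact (sound G v v E hvv hxy heqi) hadj
    · intro hall
      by_contra hnadj
      have hex : ∃ k : ZMod m, cPsi G v v E x k = cPsi G v v E y k := by
        by_cases hx1 : x = v
        · have hy : y ≠ v ∧ y ≠ v :=
            ⟨fun h => hxy (hx1.trans h.symm), fun h => hxy (hx1.trans h.symm)⟩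
          rw [hx1]
          exact ⟨E ⟨y, hy⟩, cover_v G v v E hy (hx1 ▸ hnadj)⟩
        · by_cases hy1 : y = v
          · refine ⟨E ⟨x, hx1, hx1⟩, ?_⟩
            rw [hy1]
            exact (cover_v G v v E ⟨hx1, hx1⟩
              (fun hA => hnadj (by rw [hy1]; exact hA.symm))).symm
          · exact cover_W G v v E hhalf ⟨hx1, hx1⟩ ⟨hy1, hy1⟩ hxy hnadj
      obtain ⟨k, hk⟩ := hex
      exact hall (⟨k.val, hfin k⟩ : Fin (n - 1))
        (by simpa [ZMod.natCast_zmod_val] using hk)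


lemma encB_odd {V : Type*} [Fintype V] (G : SimpleGraph V) (h3 : 3 ≤ Fintype.card V)
    (ho : Odd (Fintype.card V)) {v w : V} (hvwne : v ≠ w) (hvw : ¬ G.Adj v w) :
    ∃ φ : V → Fin (Fintype.card V - 1) → ℕ, IsEncoding G (Fintype.card V - 1) φ := by
  classical
  set n := Fintype.card V with hn
  set m := n - 2 with hm
  have hmodd : Odd m := by rcases ho with ⟨j, hj⟩; exact ⟨j - 1, by omega⟩
  haveI : NeZero m := ⟨by omega⟩
  have E : {x : V // x ≠ v ∧ x ≠ w} ≃ ZMod m :=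
    Fintype.equivOfCardEq (by rw [card_W2 hvwne, ZMod.card])
  have hhalf := half_spec hmodd
  have hwv : w ≠ v := fun h => hvwne h.symm
  have hvalm : ∀ k : ZMod m, k.val < m := fun k => ZMod.val_lt k
  have hfin : ∀ k : ZMod m, k.val < n - 1 := fun k => by have := hvalm k; omega
  have hmlt : m < n - 1 := by omega
  obtain ⟨ext, hsound, hinj, hcov⟩ :
      ∃ ext : V → ℕ,
        (∀ x y : V, x ≠ y → ext x = ext y → ¬ G.Adj x y) ∧
        (∀ x y : V, x ≠ y → ext x = ext y →
          ∃ k : ZMod m, cPsi G v w E x k ≠ cPsi G v w E y k) ∧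
        ((∃ k : ZMod m, cPsi G v w E v k = cPsi G v w E w k) ∨ ext v = ext w) := by
    by_cases hA : ∃ u : V, ∃ hu : u ≠ v ∧ u ≠ w, ¬ G.Adj v u ∧ ¬ G.Adj w u
    · obtain ⟨u, hu, h1, h2⟩ := hA
      have hAinj : Function.Injective (fun x : V => if hx : x = v then m
          else if hx' : x = w then m + 1 else (E ⟨x, hx, hx'⟩).val) := by
        intro x y he
        simp only at he
        by_cases hx1 : x = v <;> by_cases hy1 : y = v
        · rw [hx1, hy1]
        · rw [dif_pos hx1, dif_neg hy1] at he
          by_cases hy2 : y = w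
          · rw [dif_pos hy2] at he; omega
          · rw [dif_neg hy2] at he; exact absurd he.symm (hvalm _).ne
        · rw [dif_neg hx1, dif_pos hy1] at he
          by_cases hx2 : x = w
          · rw [dif_pos hx2] at he; omega
          · rw [dif_neg hx2] at he; exact absurd he (hvalm _).ne
        · rw [dif_neg hx1, dif_neg hy1] at he
          by_cases hx2 : x = w <;> by_cases hy2 : y = w
          · rw [hx2, hy2]
          · rw [dif_pos hx2, dif_neg hy2] at he
            have := hvalm (E ⟨y, hy1, hy2⟩); omega
          · rw [dif_neg hx2, dif_pos hy2] at he
            have := hvalm (E ⟨x, hx1, hx2⟩); omega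
          · rw [dif_neg hx2, dif_neg hy2] at he
            exact congrArg Subtype.val (E.injective (ZMod.val_injective m he))
      exact ⟨_, fun x y hne he => (hne (hAinj he)).elim,
        fun x y hne he => (hne (hAinj he)).elim,
        Or.inl ⟨E ⟨u, hu⟩, cover_vw G v w E hwv hu h1 h2⟩⟩
    · have hB : ∀ u : V, u ≠ v → u ≠ w → G.Adj v u ∨ G.Adj w u := by
        intro u h1 h2
        by_contra hc
        push_neg at hc
        exact hA ⟨u, ⟨h1, h2⟩, hc.1, hc.2⟩
      have hvwRounds : ∀ k : ZMod m, cPsi G v w E v k ≠ cPsi G v w E w k := by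
        intro k heq
        obtain ⟨nv, nw⟩ := M4 G v w E hwv heq
        rcases hB (cIota v w E k) (cIota_ne_v v w E k) (cIota_ne_w v w E k) with h | h
        exacts [nv h, nw h]
      have hBpair : ∀ x y : V, x ≠ y →
          (fun x : V => if hx : x = v then 0 else if hx' : x = w then 0
            else (E ⟨x, hx, hx'⟩).val + 1) x =
          (fun x : V => if hx : x = v then 0 else if hx' : x = w then 0
            else (E ⟨x, hx, hx'⟩).val + 1) y →
          (x = v ∧ y = w) ∨ (x = w ∧ y = v) := by
        intro x y hne he
        simp only at he
        by_cases hx1 : x = v <;> by_cases hy1 : y = v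
        · exact absurd (hx1.trans hy1.symm) hne
        · rw [dif_pos hx1, dif_neg hy1] at he
          by_cases hy2 : y = w
          · exact Or.inl ⟨hx1, hy2⟩
          · rw [dif_neg hy2] at he; omega
        · rw [dif_neg hx1, dif_pos hy1] at he
          by_cases hx2 : x = w
          · exact Or.inr ⟨hx2, hy1⟩
          · rw [dif_neg hx2] at he; omega
        · rw [dif_neg hx1, dif_neg hy1] at he
          by_cases hx2 : x = w <;> by_cases hy2 : y = w
          · exact absurd (hx2.trans hy2.symm) hne
          · rw [dif_pos hx2, dif_neg hy2] at he; omega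
          · rw [dif_neg hx2, dif_pos hy2] at he; omega
          · rw [dif_neg hx2, dif_neg hy2] at he
            have hval' : (E ⟨x, hx1, hx2⟩).val = (E ⟨y, hy1, hy2⟩).val := by omega
            exact absurd (congrArg Subtype.val (E.injective
              (ZMod.val_injective m hval'))) hne
      refine ⟨fun x : V => if hx : x = v then 0 else if hx' : x = w then 0
        else (E ⟨x, hx, hx'⟩).val + 1, ?_, ?_, ?_⟩
      · intro x y hne he
        rcases hBpair x y hne he with ⟨h1, h2⟩ | ⟨h1, h2⟩
        · rw [h1, h2]; exact hvw
        · rw [h1, h2]; exact fun h => hvw h.symm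
      · intro x y hne he
        rcases hBpair x y hne he with ⟨h1, h2⟩ | ⟨h1, h2⟩
        · exact ⟨0, by rw [h1, h2]; exact hvwRounds 0⟩
        · exact ⟨0, by rw [h1, h2]; exact fun h => hvwRounds 0 h.symm⟩
      · exact Or.inr (by simp [hwv])
  refine ⟨fun x i => if h : (i : ℕ) < m then cPsi G v w E x ((i : ℕ) : ZMod m) else ext x,
    ?_, ?_⟩
  · intro x y hxyEq
    by_contra hne
    have hrounds : ∀ k : ZMod m, cPsi G v w E x k = cPsi G v w E y k := by
      intro k
      have h0 : (if h : k.val < m then cPsi G v w E x ((k.val : ℕ) : ZMod m) else ext x)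
          = (if h : k.val < m then cPsi G v w E y ((k.val : ℕ) : ZMod m) else ext y) :=
        congrFun hxyEq ⟨k.val, hfin k⟩
      rw [dif_pos (hvalm k), dif_pos (hvalm k), ZMod.natCast_zmod_val] at h0
      exact h0
    have hext : ext x = ext y := by
      have h0 : (if h : m < m then cPsi G v w E x ((m : ℕ) : ZMod m) else ext x)
          = (if h : m < m then cPsi G v w E y ((m : ℕ) : ZMod m) else ext y) :=
        congrFun hxyEq ⟨m, hmlt⟩
      rwa [dif_neg (lt_irrefl m), dif_neg (lt_irrefl m)] at h0
    obtain ⟨k, hk⟩ := hinj x y hne hext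
    exact hk (hrounds k)
  · intro x y hxy
    constructor
    · intro hadj i heqi
      simp only at heqi
      by_cases hi : (i : ℕ) < m
      · rw [dif_pos hi, dif_pos hi] at heqi
        exact sound G v w E hvw hxy heqi hadj
      · rw [dif_neg hi, dif_neg hi] at heqi
        exact hsound x y hxy heqi hadj
    · intro hall
      by_contra hnadj
      have hex : (∃ k : ZMod m, cPsi G v w E x k = cPsi G v w E y k) ∨ ext x = ext y := by
        by_cases hx1 : x = v
        · by_cases hy2 : y = w
          · rw [hx1, hy2]; exact hcov
          · by_cases hy1 : y = v
            · exact absurd (hx1.trans hy1.symm) hxy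
            · left; rw [hx1]
              exact ⟨E ⟨y, hy1, hy2⟩, cover_v G v w E ⟨hy1, hy2⟩ (hx1 ▸ hnadj)⟩
        · by_cases hx2 : x = w
          · by_cases hy1 : y = v
            · rw [hx2, hy1]
              rcases hcov with ⟨k, hk⟩ | hk
              exacts [Or.inl ⟨k, hk.symm⟩, Or.inr hk.symm]
            · by_cases hy2 : y = w
              · exact absurd (hx2.trans hy2.symm) hxy
              · left; rw [hx2]
                refine ⟨E ⟨y, hy1, hy2⟩, cover_w G v w E hwv ⟨hy1, hy2⟩ ?_⟩
                rw [← hx2]; exact hnadj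
          · by_cases hy1 : y = v
            · left
              refine ⟨E ⟨x, hx1, hx2⟩, ?_⟩
              rw [hy1]
              exact (cover_v G v w E ⟨hx1, hx2⟩
                (fun hAdj => hnadj (by rw [hy1]; exact hAdj.symm))).symm
            · by_cases hy2 : y = w
              · left
                refine ⟨E ⟨x, hx1, hx2⟩, ?_⟩
                rw [hy2]
                exact (cover_w G v w E hwv ⟨hx1, hx2⟩
                  (fun hAdj => hnadj (by rw [hy2]; exact hAdj.symm))).symm
              · exact Or.inl (cover_W G v w E hhalf ⟨hx1, hx2⟩ ⟨hy1, hy2⟩ hxy hnadj)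
      rcases hex with ⟨k, hk⟩ | hk
      · refine hall ⟨k.val, hfin k⟩ ?_
        show (if h : k.val < m then cPsi G v w E x ((k.val : ℕ) : ZMod m) else ext x)
          = (if h : k.val < m then cPsi G v w E y ((k.val : ℕ) : ZMod m) else ext y)
        rw [dif_pos (hvalm k), dif_pos (hvalm k), ZMod.natCast_zmod_val]
        exact hk
      · refine hall ⟨m, hmlt⟩ ?_
        show (if h : m < m then cPsi G v w E x ((m : ℕ) : ZMod m) else ext x)
          = (if h : m < m then cPsi G v w E y ((m : ℕ) : ZMod m) else ext y)
        rw [dif_neg (lt_irrefl m), dif_neg (lt_irrefl m)]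
        exact hk

lemma encB_complete {V : Type*} [Fintype V] (G : SimpleGraph V) (h3 : 3 ≤ Fintype.card V)
    (hc : ∀ x y : V, x ≠ y → G.Adj x y) :
    ∃ φ : V → Fin (Fintype.card V - 1) → ℕ, IsEncoding G (Fintype.card V - 1) φ := by
  classical
  have e := Fintype.equivFin V
  refine ⟨fun x _ => (e x : ℕ), ?_, ?_⟩
  · intro x y hxy
    have h0 : ((e x : ℕ)) = ((e y : ℕ)) := congrFun hxy (⟨0, by omega⟩ : Fin (Fintype.card V - 1))
    exact e.injective (Fin.ext h0)
  · intro x y hxy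
    constructor
    · intro _ i h
      exact hxy (e.injective (Fin.ext h))
    · intro _
      exact hc x y hxy

lemma encB {V : Type*} [Fintype V] (G : SimpleGraph V) (h3 : 3 ≤ Fintype.card V) :
    ∃ φ : V → Fin (Fintype.card V - 1) → ℕ, IsEncoding G (Fintype.card V - 1) φ := by
  rcases Nat.even_or_odd (Fintype.card V) with he | ho
  · exact encB_even G h3 he
  · by_cases hc : ∀ x y : V, x ≠ y → G.Adj x y
    · exact encB_complete G h3 hc
    · push_neg at hc
      obtain ⟨v, w, hvwne, hvw⟩ := hc
      exact encB_odd G h3 ho hvwne hvw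

lemma enc_small {V : Type*} [Fintype V] (G : SimpleGraph V) (h2 : Fintype.card V ≤ 2) :
    ∃ φ : V → Fin 2 → ℕ, IsEncoding G 2 φ := by
  classical
  by_cases h1 : Fintype.card V ≤ 1
  · haveI := Fintype.card_le_one_iff_subsingleton.mp h1
    exact ⟨fun _ _ => 0, fun x y _ => Subsingleton.elim x y,
      fun x y hxy => (hxy (Subsingleton.elim x y)).elim⟩
  · obtain ⟨a, b, hab⟩ := Fintype.exists_pair_of_one_lt_card (α := V) (by omega)
    have hall : ∀ x : V, x = a ∨ x = b := by
      intro x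
      by_contra hx
      push_neg at hx
      have hcard : ({x, a, b} : Finset V).card = 3 := by
        rw [Finset.card_insert_of_notMem (by simp [hx.1, hx.2]),
          Finset.card_insert_of_notMem (by simp [hab]), Finset.card_singleton]
      have hle : ({x, a, b} : Finset V).card ≤ Fintype.card V :=
        Finset.card_le_card (Finset.subset_univ _)
      omega
    refine ⟨fun x => if x = a then ![0, 0] else if G.Adj a b then ![1, 1] else ![0, 1], ?_, ?_⟩
    · intro x y hxy
      simp only at hxy
      by_cases hx1 : x = a <;> by_cases hy1 : y = a
      · rw [hx1, hy1]
      · rw [if_pos hx1, if_neg hy1] at hxy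
        by_cases hadj : G.Adj a b <;> simp [hadj] at hxy
      · rw [if_neg hx1, if_pos hy1] at hxy
        by_cases hadj : G.Adj a b <;> simp [hadj] at hxy
      · have hx2 := (hall x).resolve_left hx1
        have hy2 := (hall y).resolve_left hy1
        rw [hx2, hy2]
    · intro x y hxy
      -- wlog x = a, y = b or x = b, y = a
      rcases hall x with hx | hx <;> rcases hall y with hy | hy
      · exact absurd (hx.trans hy.symm) hxy
      · rw [hx, hy]
        constructor
        · intro hadj i
          simp only [if_pos rfl, if_neg (fun h : b = a => hab h.symm), if_pos hadj]
          fin_cases i <;> simp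
        · intro hi
          by_contra hnadj
          have := hi 0
          simp only [if_pos rfl, if_neg (fun h : b = a => hab h.symm), if_neg hnadj] at this
          exact this rfl
      · rw [hx, hy]
        rw [G.adj_comm]
        constructor
        · intro hadj i
          simp only [if_pos rfl, if_neg (fun h : b = a => hab h.symm), if_pos hadj]
          fin_cases i <;> simp
        · intro hi
          by_contra hnadj
          have := hi 0
          simp only [if_pos rfl, if_neg (fun h : b = a => hab h.symm), if_neg hnadj] at this
          exact this.symm rfl
      · exact absurd (hx.trans hy.symm) hxy

lemma enc_pad {V : Type*} (G : SimpleGraph V) {l : ℕ} (hl : 0 < l)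
    (h : ∃ φ : V → Fin l → ℕ, IsEncoding G l φ) :
    ∃ φ : V → Fin (l + 1) → ℕ, IsEncoding G (l + 1) φ := by
  obtain ⟨φ, hinj, hadj⟩ := h
  refine ⟨fun x i => φ x (if h : (i : ℕ) < l then (⟨i, h⟩ : Fin l) else ⟨0, hl⟩), ?_, ?_⟩
  · intro x y hxy
    apply hinj
    funext j
    have h0 : φ x (if h : (j : ℕ) < l then (⟨(j : ℕ), h⟩ : Fin l) else ⟨0, hl⟩)
        = φ y (if h : (j : ℕ) < l then (⟨(j : ℕ), h⟩ : Fin l) else ⟨0, hl⟩) :=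
      congrFun hxy ⟨(j : ℕ), by omega⟩
    rw [dif_pos j.isLt] at h0
    simpa using h0
  · intro x y hxy
    rw [hadj x y hxy]
    constructor
    · intro hj i
      exact hj _
    · intro hi j
      have h0 := hi ⟨(j : ℕ), by omega⟩
      simp only at h0
      rw [dif_pos j.isLt] at h0
      simpa using h0

lemma enc_ge {V : Type*} [Fintype V] (G : SimpleGraph V) (l : ℕ)
    (hl2 : 2 ≤ l) (hl : Fintype.card V - 1 ≤ l) :
    ∃ φ : V → Fin l → ℕ, IsEncoding G l φ := by
  classical
  have hbase : ∃ φ : V → Fin (max 2 (Fintype.card V - 1)) → ℕ,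
      IsEncoding G (max 2 (Fintype.card V - 1)) φ := by
    by_cases h3 : 3 ≤ Fintype.card V
    · have hb : max 2 (Fintype.card V - 1) = Fintype.card V - 1 := by omega
      rw [hb]
      exact encB G h3
    · have hb : max 2 (Fintype.card V - 1) = 2 := by omega
      rw [hb]
      exact enc_small G (by omega)
  have hstep : ∀ l', max 2 (Fintype.card V - 1) ≤ l' →
      ∃ φ : V → Fin l' → ℕ, IsEncoding G l' φ := by
    intro l' hl'
    induction l', hl' using Nat.le_induction with
    | base => exact hbase
    | succ l'' hl'' ih => exact enc_pad G (by omega) ih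
  exact hstep l (by omega)

/-- Every graph on at most `t + 3` vertices has product dimension at most
`t + 2`; in particular, any graph on `m ≥ 3` vertices has product dimension at most
`m − 1`. -/
theorem pdim_small {V : Type*} [Fintype V] (G : SimpleGraph V) (t : ℕ)
    (h : Fintype.card V ≤ t + 3) :
    pdim G ≤ t + 2 ∧ (3 ≤ Fintype.card V → pdim G ≤ Fintype.card V - 1) := by
  constructor
  · exact Nat.sInf_le (enc_ge G (t + 2) (by omega) (by omega))
  · intro h3
    exact Nat.sInf_le (enc_ge G (Fintype.card V - 1) (by omega) (by omega))
end

section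
/- Let G be a k-degenerate graph (k ≥ 1) with degeneracy ordering v₁, …, v_n. Consider the random proper coloring where each vᵢ receives a color chosen uniformly at random from [3k] \ Cᵢ, where Cᵢ is the set of colors already used by the backward neighbors of vᵢ. Then for every non-adjacent pair {vᵢ, v_j}, the probability that vᵢ and v_j receive the same color is at least 1/(6k). -/
open Finset
open scoped Classical

private lemma sum_filter_iff {α : Type*} [Fintype α] (f : α → ℝ)
    (p q : α → Prop) [DecidablePred p] [DecidablePred q] (h : ∀ a, p a ↔ q a) :
    ∑ a ∈ univ.filter p, f a = ∑ a ∈ univ.filter q, f a := by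
  refine Finset.sum_congr ?_ (fun _ _ => rfl)
  ext a; simp [h a]

private lemma fiber_sum {n k : ℕ} (h3k : 0 < 3 * k) (w : (Fin n → Fin (3 * k)) → ℝ)
    (m : Fin n) (E : (Fin n → Fin (3 * k)) → Prop) [DecidablePred E] :
    ∑ c ∈ univ.filter E, w c
      = ∑ p ∈ univ.filter (fun p : Fin n → Fin (3 * k) =>
            ∀ l, ¬ l < m → p l = (⟨0, h3k⟩ : Fin (3 * k))),
          ∑ c ∈ univ.filter (fun c => (∀ l, l < m → c l = p l) ∧ E c), w c := by
  classical
  set z : Fin (3 * k) := ⟨0, h3k⟩ with hz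
  have hmaps : ∀ c ∈ univ.filter E,
      (fun l => if l < m then c l else z) ∈
        univ.filter (fun p : Fin n → Fin (3 * k) => ∀ l, ¬ l < m → p l = z) := by
    intro c _
    simp only [mem_filter, mem_univ, true_and]
    intro l hl
    simp [hl]
  rw [← Finset.sum_fiberwise_of_maps_to hmaps w]
  refine Finset.sum_congr rfl (fun p hp => ?_)
  simp only [mem_filter, mem_univ, true_and] at hp
  refine Finset.sum_congr ?_ (fun _ _ => rfl)
  ext c
  simp only [mem_filter, mem_univ, true_and]
  constructor
  · rintro ⟨hE, hc⟩
    refine ⟨fun l hl => ?_, hE⟩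
    have := congrFun hc l
    simpa [hl] using this
  · rintro ⟨hc, hE⟩
    refine ⟨hE, funext fun l => ?_⟩
    by_cases hl : l < m
    · simpa [hl] using hc l hl
    · simp [hl, (hp l hl).symm]

/-- Helper: the asymmetric version with `i < j`. -/
private theorem same_color_probability_aux {n k : ℕ} (hk : 1 ≤ k) (G : SimpleGraph (Fin n))
    (hdeg : ∀ i : Fin n, (Finset.univ.filter (fun j => j < i ∧ G.Adj j i)).card ≤ k)
    (w : (Fin n → Fin (3 * k)) → ℝ)
    (hw0 : ∀ c, 0 ≤ w c) (hw1 : ∑ c, w c = 1)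
    (hcond : ∀ (i : Fin n) (p : Fin n → Fin (3 * k)) (x : Fin (3 * k)),
      (x ∉ ((Finset.univ.filter (fun j => j < i ∧ G.Adj j i)).image p) →
        (∑ c ∈ Finset.univ.filter
            (fun c : Fin n → Fin (3 * k) => (∀ j, j < i → c j = p j) ∧ c i = x), w c) *
          ((3 * k - ((Finset.univ.filter (fun j => j < i ∧ G.Adj j i)).image p).card : ℕ) : ℝ)
        = ∑ c ∈ Finset.univ.filter
            (fun c : Fin n → Fin (3 * k) => ∀ j, j < i → c j = p j), w c) ∧
      (x ∈ ((Finset.univ.filter (fun j => j < i ∧ G.Adj j i)).image p) →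
        (∑ c ∈ Finset.univ.filter
            (fun c : Fin n → Fin (3 * k) => (∀ j, j < i → c j = p j) ∧ c i = x), w c) = 0)) :
    ∀ i j : Fin n, i < j → ¬ G.Adj i j →
      1 / (6 * k : ℝ) ≤
        ∑ c ∈ Finset.univ.filter (fun c : Fin n → Fin (3 * k) => c i = c j), w c := by
  intro i j hij hadj
  have h3k : 0 < 3 * k := by omega
  have hk0 : (0:ℝ) < (k:ℝ) := by exact_mod_cast hk
  -- abbreviations (as plain `have`-level facts about explicit sums)
  have hSnn : ∀ (m : Fin n) (p : Fin n → Fin (3*k)),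
      (0:ℝ) ≤ ∑ c ∈ univ.filter (fun c : Fin n → Fin (3*k) => ∀ l, l < m → c l = p l), w c :=
    fun m p => Finset.sum_nonneg (fun c _ => hw0 c)
  have hSxnn : ∀ (m : Fin n) (p : Fin n → Fin (3*k)) (x : Fin (3*k)),
      (0:ℝ) ≤ ∑ c ∈ univ.filter
        (fun c : Fin n → Fin (3*k) => (∀ l, l < m → c l = p l) ∧ c m = x), w c :=
    fun m p x => Finset.sum_nonneg (fun c _ => hw0 c)
  have hC_card : ∀ (m : Fin n) (p : Fin n → Fin (3*k)),
      (((univ.filter (fun l => l < m ∧ G.Adj l m)).image p).card) ≤ k :=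
    fun m p => le_trans Finset.card_image_le (hdeg m)
  -- upper bound on conditional probability of a fixed color
  have hub : ∀ (m : Fin n) (p : Fin n → Fin (3*k)) (x : Fin (3*k)),
      (∑ c ∈ univ.filter
        (fun c : Fin n → Fin (3*k) => (∀ l, l < m → c l = p l) ∧ c m = x), w c)
      ≤ (∑ c ∈ univ.filter (fun c : Fin n → Fin (3*k) => ∀ l, l < m → c l = p l), w c)
        / (2 * k) := by
    intro m p x
    by_cases hx : x ∈ (univ.filter (fun l => l < m ∧ G.Adj l m)).image p
    · rw [(hcond m p x).2 hx]
      exact div_nonneg (hSnn m p) (by positivity)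
    · have hEq := (hcond m p x).1 hx
      have hd : (2*(k:ℝ)) ≤
          ((3 * k - ((univ.filter (fun l => l < m ∧ G.Adj l m)).image p).card : ℕ) : ℝ) := by
        have h1 := hC_card m p
        have : 2*k ≤ 3 * k - ((univ.filter (fun l => l < m ∧ G.Adj l m)).image p).card := by
          omega
        exact_mod_cast this
      rw [le_div_iff₀ (by positivity)]
      calc (∑ c ∈ univ.filter
            (fun c : Fin n → Fin (3*k) => (∀ l, l < m → c l = p l) ∧ c m = x), w c) * (2*k)
          ≤ (∑ c ∈ univ.filter
            (fun c : Fin n → Fin (3*k) => (∀ l, l < m → c l = p l) ∧ c m = x), w c) *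
            ((3 * k - ((univ.filter (fun l => l < m ∧ G.Adj l m)).image p).card : ℕ) : ℝ) :=
            mul_le_mul_of_nonneg_left hd (hSxnn m p x)
        _ = _ := hEq
  -- lower bound for allowed colors
  have hlb : ∀ (m : Fin n) (p : Fin n → Fin (3*k)) (x : Fin (3*k)),
      x ∉ (univ.filter (fun l => l < m ∧ G.Adj l m)).image p →
      (∑ c ∈ univ.filter (fun c : Fin n → Fin (3*k) => ∀ l, l < m → c l = p l), w c) / (3 * k)
      ≤ ∑ c ∈ univ.filter
          (fun c : Fin n → Fin (3*k) => (∀ l, l < m → c l = p l) ∧ c m = x), w c := by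
    intro m p x hx
    have hEq := (hcond m p x).1 hx
    have hd : ((3 * k - ((univ.filter (fun l => l < m ∧ G.Adj l m)).image p).card : ℕ) : ℝ)
        ≤ (3*(k:ℝ)) := by
      have : 3 * k - ((univ.filter (fun l => l < m ∧ G.Adj l m)).image p).card ≤ 3 * k := by
        omega
      exact_mod_cast this
    rw [div_le_iff₀ (by positivity)]
    calc (∑ c ∈ univ.filter (fun c : Fin n → Fin (3*k) => ∀ l, l < m → c l = p l), w c)
        = (∑ c ∈ univ.filter
            (fun c : Fin n → Fin (3*k) => (∀ l, l < m → c l = p l) ∧ c m = x), w c) *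
          ((3 * k - ((univ.filter (fun l => l < m ∧ G.Adj l m)).image p).card : ℕ) : ℝ) :=
          hEq.symm
      _ ≤ _ := mul_le_mul_of_nonneg_left hd (hSxnn m p x)
  -- total prefix mass is 1
  have hsum1 : ∀ m : Fin n,
      ∑ p ∈ univ.filter (fun p : Fin n → Fin (3*k) =>
          ∀ l, ¬ l < m → p l = (⟨0, h3k⟩ : Fin (3*k))),
        ∑ c ∈ univ.filter (fun c : Fin n → Fin (3*k) => ∀ l, l < m → c l = p l), w c = 1 := by
    intro m
    have h := fiber_sum h3k w m (fun _ => True)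
    simp only [filter_true, and_true] at h
    rw [← h]
    simpa using hw1
  -- pairwise collision upper bound
  have hpair : ∀ a m : Fin n, a < m →
      ∑ c ∈ univ.filter (fun c : Fin n → Fin (3*k) => c m = c a), w c ≤ 1 / (2*k) := by
    intro a m ham
    rw [fiber_sum h3k w m (fun c => c m = c a)]
    calc ∑ p ∈ univ.filter (fun p : Fin n → Fin (3*k) =>
            ∀ l, ¬ l < m → p l = (⟨0, h3k⟩ : Fin (3*k))),
          ∑ c ∈ univ.filter (fun c => (∀ l, l < m → c l = p l) ∧ c m = c a), w c
        = ∑ p ∈ univ.filter (fun p : Fin n → Fin (3*k) =>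
            ∀ l, ¬ l < m → p l = (⟨0, h3k⟩ : Fin (3*k))),
          ∑ c ∈ univ.filter (fun c => (∀ l, l < m → c l = p l) ∧ c m = p a), w c := by
          refine Finset.sum_congr rfl (fun p _ => ?_)
          refine sum_filter_iff w _ _ (fun c => ?_)
          constructor
          · rintro ⟨h1, h2⟩; exact ⟨h1, by rw [h2, h1 a ham]⟩
          · rintro ⟨h1, h2⟩; exact ⟨h1, by rw [h2, ← h1 a ham]⟩
      _ ≤ ∑ p ∈ univ.filter (fun p : Fin n → Fin (3*k) =>
            ∀ l, ¬ l < m → p l = (⟨0, h3k⟩ : Fin (3*k))),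
          (∑ c ∈ univ.filter (fun c : Fin n → Fin (3*k) => ∀ l, l < m → c l = p l), w c)
            / (2*k) := Finset.sum_le_sum (fun p _ => hub m p (p a))
      _ = 1 / (2*k) := by rw [← Finset.sum_div, hsum1 m]
  -- probability that `c i` collides with a backward neighbor of `j` is at most 1/2
  have hQ : ∑ c ∈ univ.filter (fun c : Fin n → Fin (3*k) =>
        c i ∈ (univ.filter (fun l => l < j ∧ G.Adj l j)).image c), w c ≤ 1/2 := by
    have hsub : ∀ c ∈ univ.filter (fun c : Fin n → Fin (3*k) =>
          c i ∈ (univ.filter (fun l => l < j ∧ G.Adj l j)).image c),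
        w c ≤ ∑ l ∈ univ.filter (fun l => l < j ∧ G.Adj l j),
          (if c l = c i then w c else 0) := by
      intro c hc
      simp only [mem_filter, mem_univ, true_and, Finset.mem_image] at hc
      obtain ⟨l, hl, hlc⟩ := hc
      have hl' : l ∈ univ.filter (fun l => l < j ∧ G.Adj l j) := by
        simp only [mem_filter, mem_univ, true_and]; exact hl
      calc w c = (if c l = c i then w c else 0) := by simp [hlc]
        _ ≤ _ := Finset.single_le_sum (f := fun t => if c t = c i then w c else 0)
            (fun t _ => by split_ifs; exacts [hw0 c, le_rfl]) hl'
    calc ∑ c ∈ univ.filter (fun c : Fin n → Fin (3*k) =>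
            c i ∈ (univ.filter (fun l => l < j ∧ G.Adj l j)).image c), w c
        ≤ ∑ c ∈ univ.filter (fun c : Fin n → Fin (3*k) =>
            c i ∈ (univ.filter (fun l => l < j ∧ G.Adj l j)).image c),
            ∑ l ∈ univ.filter (fun l => l < j ∧ G.Adj l j),
              (if c l = c i then w c else 0) := Finset.sum_le_sum hsub
      _ ≤ ∑ c : Fin n → Fin (3*k),
            ∑ l ∈ univ.filter (fun l => l < j ∧ G.Adj l j),
              (if c l = c i then w c else 0) := by
          refine Finset.sum_le_sum_of_subset_of_nonneg (Finset.filter_subset _ _) ?_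
          intro c _ _
          exact Finset.sum_nonneg (fun l _ => by split_ifs with hx0; exacts [hw0 c, le_rfl])
      _ = ∑ l ∈ univ.filter (fun l => l < j ∧ G.Adj l j),
            ∑ c : Fin n → Fin (3*k), (if c l = c i then w c else 0) := Finset.sum_comm
      _ = ∑ l ∈ univ.filter (fun l => l < j ∧ G.Adj l j),
            ∑ c ∈ univ.filter (fun c : Fin n → Fin (3*k) => c l = c i), w c := by
          refine Finset.sum_congr rfl (fun l _ => ?_)
          rw [Finset.sum_filter]
      _ ≤ ∑ l ∈ univ.filter (fun l => l < j ∧ G.Adj l j), 1/(2*(k:ℝ)) := by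
          refine Finset.sum_le_sum (fun l hl => ?_)
          simp only [mem_filter, mem_univ, true_and] at hl
          have hli : l ≠ i := by rintro rfl; exact hadj hl.2
          rcases lt_or_gt_of_ne hli with h | h
          · rw [sum_filter_iff w _ (fun c : Fin n → Fin (3*k) => c i = c l)
              (fun c => eq_comm)]
            exact hpair l i h
          · exact hpair i l h
      _ = (univ.filter (fun l => l < j ∧ G.Adj l j)).card * (1/(2*(k:ℝ))) := by
          rw [Finset.sum_const, nsmul_eq_mul]
      _ ≤ k * (1/(2*(k:ℝ))) := by
          have h1 : ((univ.filter (fun l => l < j ∧ G.Adj l j)).card : ℝ) ≤ k := by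
            exact_mod_cast hdeg j
          have h2 : (0:ℝ) ≤ 1/(2*k) := by positivity
          exact mul_le_mul_of_nonneg_right h1 h2
      _ = 1/2 := by field_simp
  -- the good event has mass at least 1/2
  have hGood : (1:ℝ)/2 ≤ ∑ c ∈ univ.filter (fun c : Fin n → Fin (3*k) =>
      ¬ (c i ∈ (univ.filter (fun l => l < j ∧ G.Adj l j)).image c)), w c := by
    have hsplit := Finset.sum_filter_add_sum_filter_not univ
      (fun c : Fin n → Fin (3*k) =>
        c i ∈ (univ.filter (fun l => l < j ∧ G.Adj l j)).image c) w
    rw [hw1] at hsplit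
    linarith
  -- the mass of good prefixes
  have hkey : ∑ p ∈ (univ.filter (fun p : Fin n → Fin (3*k) =>
          ∀ l, ¬ l < j → p l = (⟨0, h3k⟩ : Fin (3*k)))).filter
        (fun p => p i ∉ (univ.filter (fun l => l < j ∧ G.Adj l j)).image p),
      (∑ c ∈ univ.filter (fun c : Fin n → Fin (3*k) => ∀ l, l < j → c l = p l), w c)
      = ∑ c ∈ univ.filter (fun c : Fin n → Fin (3*k) =>
          ¬ (c i ∈ (univ.filter (fun l => l < j ∧ G.Adj l j)).image c)), w c := by
    rw [fiber_sum h3k w j (fun c => ¬ (c i ∈ (univ.filter (fun l => l < j ∧ G.Adj l j)).image c))]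
    have hiff : ∀ (p c : Fin n → Fin (3*k)), (∀ l, l < j → c l = p l) →
        ((c i ∈ (univ.filter (fun l => l < j ∧ G.Adj l j)).image c)
          ↔ (p i ∈ (univ.filter (fun l => l < j ∧ G.Adj l j)).image p)) := by
      intro p c hc
      have himg : (univ.filter (fun l => l < j ∧ G.Adj l j)).image c
          = (univ.filter (fun l => l < j ∧ G.Adj l j)).image p := by
        refine Finset.image_congr ?_
        intro l hl
        simp only [mem_coe, mem_filter, mem_univ, true_and] at hl
        exact hc l hl.1
      rw [himg, hc i hij]
    have hinner : ∀ p ∈ univ.filter (fun p : Fin n → Fin (3*k) =>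
          ∀ l, ¬ l < j → p l = (⟨0, h3k⟩ : Fin (3*k))),
        (∑ c ∈ univ.filter (fun c => (∀ l, l < j → c l = p l) ∧
            ¬ (c i ∈ (univ.filter (fun l => l < j ∧ G.Adj l j)).image c)), w c)
          = if p i ∉ (univ.filter (fun l => l < j ∧ G.Adj l j)).image p
            then ∑ c ∈ univ.filter (fun c : Fin n → Fin (3*k) => ∀ l, l < j → c l = p l), w c
            else 0 := by
      intro p _
      by_cases hcase : p i ∈ (univ.filter (fun l => l < j ∧ G.Adj l j)).image p
      · simp only [hcase, not_true_eq_false, if_false]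
        have hempty : univ.filter (fun c : Fin n → Fin (3*k) => (∀ l, l < j → c l = p l) ∧
            ¬ (c i ∈ (univ.filter (fun l => l < j ∧ G.Adj l j)).image c)) = ∅ := by
          ext c
          simp only [mem_filter, mem_univ, true_and, Finset.notMem_empty, iff_false, not_and]
          intro h1 h2
          exact h2 ((hiff p c h1).mpr hcase)
        rw [hempty, Finset.sum_empty]
      · simp only [hcase, not_false_eq_true, if_true]
        refine sum_filter_iff w _ _ (fun c => ?_)
        constructor
        · rintro ⟨h1, _⟩; exact h1
        · intro h1; exact ⟨h1, fun hmem => hcase ((hiff p c h1).mp hmem)⟩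
    rw [Finset.sum_congr rfl hinner, Finset.sum_filter]
  -- main computation
  calc 1 / (6 * (k:ℝ))
      = ((1:ℝ)/2) / (3 * k) := by field_simp; ring
    _ ≤ (∑ c ∈ univ.filter (fun c : Fin n → Fin (3*k) =>
          ¬ (c i ∈ (univ.filter (fun l => l < j ∧ G.Adj l j)).image c)), w c) / (3 * k) := by
        gcongr
    _ = (∑ p ∈ (univ.filter (fun p : Fin n → Fin (3*k) =>
            ∀ l, ¬ l < j → p l = (⟨0, h3k⟩ : Fin (3*k)))).filter
          (fun p => p i ∉ (univ.filter (fun l => l < j ∧ G.Adj l j)).image p),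
        (∑ c ∈ univ.filter (fun c : Fin n → Fin (3*k) => ∀ l, l < j → c l = p l), w c))
          / (3 * k) := by rw [hkey]
    _ = ∑ p ∈ (univ.filter (fun p : Fin n → Fin (3*k) =>
            ∀ l, ¬ l < j → p l = (⟨0, h3k⟩ : Fin (3*k)))).filter
          (fun p => p i ∉ (univ.filter (fun l => l < j ∧ G.Adj l j)).image p),
        (∑ c ∈ univ.filter (fun c : Fin n → Fin (3*k) => ∀ l, l < j → c l = p l), w c)
          / (3 * k) := Finset.sum_div _ _ _
    _ ≤ ∑ p ∈ (univ.filter (fun p : Fin n → Fin (3*k) =>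
            ∀ l, ¬ l < j → p l = (⟨0, h3k⟩ : Fin (3*k)))).filter
          (fun p => p i ∉ (univ.filter (fun l => l < j ∧ G.Adj l j)).image p),
        ∑ c ∈ univ.filter
          (fun c : Fin n → Fin (3*k) => (∀ l, l < j → c l = p l) ∧ c j = p i), w c := by
        refine Finset.sum_le_sum (fun p hp => ?_)
        refine hlb j p (p i) ?_
        exact (Finset.mem_filter.mp hp).2
    _ ≤ ∑ p ∈ univ.filter (fun p : Fin n → Fin (3*k) =>
            ∀ l, ¬ l < j → p l = (⟨0, h3k⟩ : Fin (3*k))),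
        ∑ c ∈ univ.filter
          (fun c : Fin n → Fin (3*k) => (∀ l, l < j → c l = p l) ∧ c j = p i), w c := by
        refine Finset.sum_le_sum_of_subset_of_nonneg (Finset.filter_subset _ _) ?_
        exact fun p _ _ => hSxnn j p (p i)
    _ = ∑ p ∈ univ.filter (fun p : Fin n → Fin (3*k) =>
            ∀ l, ¬ l < j → p l = (⟨0, h3k⟩ : Fin (3*k))),
        ∑ c ∈ univ.filter
          (fun c : Fin n → Fin (3*k) => (∀ l, l < j → c l = p l) ∧ c i = c j), w c := by
        refine Finset.sum_congr rfl (fun p _ => ?_)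
        refine sum_filter_iff w _ _ (fun c => ?_)
        constructor
        · rintro ⟨h1, h2⟩; exact ⟨h1, by rw [h1 i hij, ← h2]⟩
        · rintro ⟨h1, h2⟩; exact ⟨h1, by rw [← h2, h1 i hij]⟩
    _ = ∑ c ∈ Finset.univ.filter (fun c : Fin n → Fin (3 * k) => c i = c j), w c :=
        (fiber_sum h3k w j (fun c => c i = c j)).symm

/-- In the sequential random proper coloring of a `k`-degenerate graph with
`3k` colors (each vertex `vᵢ`, in the degeneracy order, receives a color uniformly at
random from `[3k] \ Cᵢ`, `Cᵢ` being the colors of its backward neighbors), any two fixed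
non-adjacent vertices receive the same color with probability at least `1/(6k)`.

Vertices are identified with `Fin n` in degeneracy order; the distribution of the random
coloring is modelled by a probability weight `w` on colorings that satisfies the
conditional-uniformity property of the sequential procedure. -/
theorem same_color_probability {n k : ℕ} (hk : 1 ≤ k) (G : SimpleGraph (Fin n))
    (hdeg : ∀ i : Fin n, (Finset.univ.filter (fun j => j < i ∧ G.Adj j i)).card ≤ k)
    (w : (Fin n → Fin (3 * k)) → ℝ)
    (hw0 : ∀ c, 0 ≤ w c) (hw1 : ∑ c, w c = 1)
    -- conditional uniformity: given any prefix, the color of `v i` is uniform on the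
    -- colors not used by its backward neighbors
    (hcond : ∀ (i : Fin n) (p : Fin n → Fin (3 * k)) (x : Fin (3 * k)),
      (x ∉ ((Finset.univ.filter (fun j => j < i ∧ G.Adj j i)).image p) →
        (∑ c ∈ Finset.univ.filter
            (fun c : Fin n → Fin (3 * k) => (∀ j, j < i → c j = p j) ∧ c i = x), w c) *
          ((3 * k - ((Finset.univ.filter (fun j => j < i ∧ G.Adj j i)).image p).card : ℕ) : ℝ)
        = ∑ c ∈ Finset.univ.filter
            (fun c : Fin n → Fin (3 * k) => ∀ j, j < i → c j = p j), w c) ∧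
      (x ∈ ((Finset.univ.filter (fun j => j < i ∧ G.Adj j i)).image p) →
        (∑ c ∈ Finset.univ.filter
            (fun c : Fin n → Fin (3 * k) => (∀ j, j < i → c j = p j) ∧ c i = x), w c) = 0)) :
    ∀ i j : Fin n, i ≠ j → ¬ G.Adj i j →
      1 / (6 * k : ℝ) ≤
        ∑ c ∈ Finset.univ.filter (fun c : Fin n → Fin (3 * k) => c i = c j), w c := by
  intro i j hne hadj
  rcases hne.lt_or_gt with h | h
  · exact same_color_probability_aux hk G hdeg w hw0 hw1 hcond i j h hadj
  · have hres := same_color_probability_aux hk G hdeg w hw0 hw1 hcond j i h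
      (fun a => hadj a.symm)
    refine le_trans hres (le_of_eq ?_)
    exact sum_filter_iff w _ _ (fun c => eq_comm)
end

section
/- For every graph G, pdim(G) ≤ eq(Ḡ) + 1, where eq(Ḡ) is the equivalence number of the complement of G. -/
/-- An equivalence graph: a vertex-disjoint union of cliques, i.e. a graph whose
adjacency relation together with equality is transitive. -/
def IsEquivalenceGraph {V : Type*} (K : SimpleGraph V) : Prop :=
  ∀ a b c : V, K.Adj a b → K.Adj b c → a ≠ c → K.Adj a c

/-- The equivalence number of `H`: the minimum number of equivalence subgraphs of `H`
needed to cover all edges of `H`. -/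
noncomputable def eqNum {V : Type*} (H : SimpleGraph V) : ℕ :=
  sInf {m | ∃ K : Fin m → SimpleGraph V,
    (∀ i, K i ≤ H ∧ IsEquivalenceGraph (K i)) ∧
    ∀ u v : V, H.Adj u v → ∃ i, (K i).Adj u v}

lemma encode_aux {V : Type*} [Fintype V] (G : SimpleGraph V) (m : ℕ)
    (K : Fin m → SimpleGraph V)
    (hK : ∀ i, K i ≤ Gᶜ ∧ IsEquivalenceGraph (K i))
    (hcov : ∀ u v : V, Gᶜ.Adj u v → ∃ i, (K i).Adj u v) :
    ∃ φ : V → Fin (m+1) → ℕ, IsEncoding G (m+1) φ := by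
  classical
  set f : V → ℕ := fun v => ((Fintype.equivFin V) v : ℕ) with hf
  have hfinj : Function.Injective f := by
    intro a b h
    exact (Fintype.equivFin V).injective (Fin.ext h)
  set R : Fin m → V → V → Prop := fun i u v => u = v ∨ (K i).Adj u v with hR
  have hRrefl : ∀ i v, R i v v := fun i v => Or.inl rfl
  have hRsymm : ∀ i u v, R i u v → R i v u := by
    intro i u v h
    rcases h with h | h
    · exact Or.inl h.symm
    · exact Or.inr h.symm
  have hRtrans : ∀ i a b c, R i a b → R i b c → R i a c := by
    intro i a b c hab hbc
    rcases hab with rfl | hab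
    · exact hbc
    rcases hbc with rfl | hbc
    · exact Or.inr hab
    by_cases hac : a = c
    · exact Or.inl hac
    · exact Or.inr ((hK i).2 a b c hab hbc hac)
  set S : Fin m → V → Set ℕ := fun i v => f '' {u | R i v u} with hS
  have hmem : ∀ i v, f v ∈ S i v := fun i v => ⟨v, hRrefl i v, rfl⟩
  have hinf_mem : ∀ i v, sInf (S i v) ∈ S i v := fun i v => Nat.sInf_mem ⟨f v, hmem i v⟩
  have hkey : ∀ i u v, sInf (S i u) = sInf (S i v) → R i u v := by
    intro i u v h
    obtain ⟨a, ha, hfa⟩ := hinf_mem i u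
    obtain ⟨b, hb, hfb⟩ := hinf_mem i v
    have hab : a = b := hfinj (by rw [hfa, hfb, h])
    subst hab
    exact hRtrans i u a v ha (hRsymm i v a hb)
  have hSeq : ∀ i u v, R i u v → S i u = S i v := by
    intro i u v h
    have hset : {x | R i u x} = {x | R i v x} := by
      ext x
      exact ⟨fun hx => hRtrans i v u x (hRsymm i u v h) hx,
             fun hx => hRtrans i u v x h hx⟩
    simp only [hS, hset]
  refine ⟨fun v j => if h : (j : ℕ) < m then sInf (S ⟨j, h⟩ v) else f v, ?_, ?_⟩
  · intro u v huv
    have h := congrFun huv (Fin.last m)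
    simp only [Fin.val_last, lt_irrefl, dif_neg] at h
    exact hfinj h
  · intro u v huv
    constructor
    · intro hadj j
      by_cases h : (j : ℕ) < m
      · simp only [dif_pos h]
        intro heq
        rcases hkey ⟨j, h⟩ u v heq with h' | h'
        · exact huv h'
        · exact ((hK ⟨j, h⟩).1 h').2 hadj
      · simp only [dif_neg h]
        exact fun heq => huv (hfinj heq)
    · intro hall
      by_contra hadj
      have hc : Gᶜ.Adj u v := ⟨huv, hadj⟩
      obtain ⟨i, hi⟩ := hcov u v hc
      have hSuv : S i u = S i v := hSeq i u v (Or.inr hi)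
      have h2 := hall ⟨(i : ℕ), Nat.lt_succ_of_lt i.isLt⟩
      simp only [dif_pos i.isLt, Fin.eta] at h2
      exact h2 (by rw [hSuv])

lemma eqNum_set_nonempty {V : Type*} [Fintype V] (H : SimpleGraph V) :
    ({m | ∃ K : Fin m → SimpleGraph V,
      (∀ i, K i ≤ H ∧ IsEquivalenceGraph (K i)) ∧
      ∀ u v : V, H.Adj u v → ∃ i, (K i).Adj u v}).Nonempty := by
  classical
  set n := Fintype.card (Sym2 V) with hn
  set e : Fin n ≃ Sym2 V := (Fintype.equivFin (Sym2 V)).symm with he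
  refine ⟨n, fun i => H ⊓ SimpleGraph.fromEdgeSet {e i}, ?_, ?_⟩
  · intro i
    refine ⟨inf_le_left, ?_⟩
    intro a b c hab hbc hac
    have h1 : s(a, b) = e i := by
      have := hab.2
      rw [SimpleGraph.fromEdgeSet_adj] at this
      simpa using this.1
    have h2 : s(b, c) = e i := by
      have := hbc.2
      rw [SimpleGraph.fromEdgeSet_adj] at this
      simpa using this.1
    have h3 : s(a, b) = s(b, c) := h1.trans h2.symm
    rw [Sym2.eq_iff] at h3
    rcases h3 with ⟨rfl, rfl⟩ | ⟨rfl, -⟩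
    · exact absurd rfl hab.ne
    · exact absurd rfl hac
  · intro u v huv
    refine ⟨e.symm s(u, v), ?_⟩
    refine ⟨huv, ?_⟩
    rw [SimpleGraph.fromEdgeSet_adj]
    exact ⟨by simp, huv.ne⟩

/-- For every graph `G`, `pdim(G) ≤ eq(Ḡ) + 1`. -/
theorem pdim_le_eqNum_compl {V : Type*} [Fintype V] (G : SimpleGraph V) :
    pdim G ≤ eqNum Gᶜ + 1 := by
  have hne := eqNum_set_nonempty Gᶜ
  have hmem := Nat.sInf_mem hne
  obtain ⟨K, hK, hcov⟩ := hmem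
  obtain ⟨φ, hφ⟩ := encode_aux G (eqNum Gᶜ) K hK hcov
  exact Nat.sInf_le ⟨φ, hφ⟩
end
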